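/- arXiv:1701.03401 — 5 statements merged into one kernel-verified Lean document; each statement's English description precedes it below -/
import Mathlib

section
/- For a strict partition λ = (λ₁ > λ₂ > ... > λ_ℓ > 0), the number n_λ = (|λ|!/(λ₁!⋯λ_ℓ!)) · ∏_{1 ≤ i < j ≤ ℓ} (λ_i − λ_j)/(λ_i + λ_j) is a positive integer (it counts shifted standard tableaux of shape λ). -/
open Finset Polynomial

theorem pair_split {M : Type*} [CommMonoid M] {ℓ : ℕ} (g : Fin ℓ → Fin ℓ → M) (i : Fin ℓ) :
    (∏ a, ∏ b, if a < b then g a b else 1)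
      = ((∏ b ∈ univ.filter (fun b => i < b), g i b) *
         (∏ a ∈ univ.filter (fun a => a < i), g a i)) *
        ∏ a, ∏ b, if a < b ∧ a ≠ i ∧ b ≠ i then g a b else 1 := by
  have key : ∀ a b : Fin ℓ, (if a < b then g a b else 1)
      = (if a = i then (if a < b then g a b else 1) else 1) *
        ((if b = i then (if a < b then g a b else 1) else 1) *
         (if a < b ∧ a ≠ i ∧ b ≠ i then g a b else 1)) := by
    intro a b
    by_cases hab : a < b
    · by_cases ha : a = i
      · have hb : ¬ b = i := by rintro rfl; subst ha; exact lt_irrefl _ hab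
        simp [hab, ha, hb]
      · by_cases hb : b = i <;> simp [hab, ha, hb]
    · simp [hab]
  calc (∏ a, ∏ b, if a < b then g a b else 1)
      = ∏ a, ∏ b, ((if a = i then (if a < b then g a b else 1) else 1) *
        ((if b = i then (if a < b then g a b else 1) else 1) *
         (if a < b ∧ a ≠ i ∧ b ≠ i then g a b else 1))) :=
        Finset.prod_congr rfl fun a _ => Finset.prod_congr rfl fun b _ => key a b
    _ = (∏ a, ∏ b, (if a = i then (if a < b then g a b else 1) else 1)) *
        ((∏ a, ∏ b, (if b = i then (if a < b then g a b else 1) else 1)) *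
         (∏ a, ∏ b, (if a < b ∧ a ≠ i ∧ b ≠ i then g a b else 1))) := by
        simp only [Finset.prod_mul_distrib]
    _ = ((∏ b ∈ univ.filter (fun b => i < b), g i b) *
         (∏ a ∈ univ.filter (fun a => a < i), g a i)) *
        ∏ a, ∏ b, if a < b ∧ a ≠ i ∧ b ≠ i then g a b else 1 := by
        have hA : (∏ a, ∏ b, (if a = i then (if a < b then g a b else 1) else 1))
            = ∏ b ∈ univ.filter (fun b => i < b), g i b := by
          calc (∏ a, ∏ b, (if a = i then (if a < b then g a b else 1) else 1))
              = ∏ a, (if a = i then (∏ b, if a < b then g a b else 1) else 1) := by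
                refine Finset.prod_congr rfl fun a _ => ?_
                split <;> simp
            _ = ∏ b, if i < b then g i b else 1 := by
                rw [Finset.prod_ite_eq' univ i (fun a => ∏ b, if a < b then g a b else 1)]
                simp
            _ = ∏ b ∈ univ.filter (fun b => i < b), g i b := (Finset.prod_filter _ _).symm
        have hB : (∏ a, ∏ b, (if b = i then (if a < b then g a b else 1) else 1))
            = ∏ a ∈ univ.filter (fun a => a < i), g a i := by
          calc (∏ a, ∏ b, (if b = i then (if a < b then g a b else 1) else 1))
              = ∏ a, (if a < i then g a i else 1) := by
                refine Finset.prod_congr rfl fun a _ => ?_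
                rw [Finset.prod_ite_eq' univ i (fun b => if a < b then g a b else 1)]
                simp
            _ = ∏ a ∈ univ.filter (fun a => a < i), g a i := (Finset.prod_filter _ _).symm
        rw [hA, hB, mul_assoc]

theorem prod_erase_split {M : Type*} [CommMonoid M] {ℓ : ℕ} (i : Fin ℓ) (f : Fin ℓ → M) :
    ∏ j ∈ univ.erase i, f j
      = (∏ j ∈ univ.filter (fun j => i < j), f j) * ∏ j ∈ univ.filter (fun j => j < i), f j := by
  rw [← Finset.prod_filter_mul_prod_filter_not (univ.erase i) (fun j => i < j)]
  congr 1
  · congr 1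
    ext j
    simp only [mem_filter, mem_erase, mem_univ, true_and, and_true, ne_eq, Fin.lt_def,
      ← Fin.val_eq_val]
    omega
  · congr 1
    ext j
    simp only [mem_filter, mem_erase, mem_univ, true_and, and_true, ne_eq, Fin.lt_def,
      not_lt, ← Fin.val_eq_val]
    omega

theorem lagrange_sum {F : Type*} [Field F] {ℓ : ℕ} (μ ν : Fin ℓ → F)
    (hinj : Function.Injective μ) :
    ∑ i, (∏ j, (μ i - ν j)) * (∏ j ∈ univ.erase i, (μ i - μ j))⁻¹
      = ∑ i, (μ i - ν i) := by
  rcases Nat.eq_zero_or_pos ℓ with h0 | hl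
  · subst h0; simp
  have hcard : (univ : Finset (Fin ℓ)).card = ℓ := by simp
  have hvs : Set.InjOn μ (univ : Finset (Fin ℓ)) := hinj.injOn
  set P : F[X] := Lagrange.nodal univ ν - Lagrange.nodal univ μ with hP
  have hdeg : P.degree < (univ : Finset (Fin ℓ)).card := by
    have := Polynomial.degree_sub_lt
      (p := Lagrange.nodal univ ν) (q := Lagrange.nodal univ μ)
      (by rw [Lagrange.degree_nodal, Lagrange.degree_nodal])
      Lagrange.nodal_ne_zero
      (by rw [(Lagrange.nodal_monic).leadingCoeff, (Lagrange.nodal_monic).leadingCoeff])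
    rwa [Lagrange.degree_nodal] at this
  have hinterp : Lagrange.interpolate univ μ (fun i => P.eval (μ i)) = P :=
    (Lagrange.eq_interpolate hvs hdeg).symm
  -- take coefficient ℓ - 1 on both sides
  have hco := congrArg (fun q : F[X] => q.coeff (ℓ - 1)) hinterp
  simp only [Lagrange.interpolate_apply] at hco
  rw [Polynomial.finset_sum_coeff] at hco
  have hbasis : ∀ i : Fin ℓ, (Lagrange.basis univ μ i).coeff (ℓ - 1)
      = Lagrange.nodalWeight univ μ i := by
    intro i
    rw [Lagrange.basis_eq_prod_sub_inv_mul_nodal_div (mem_univ i),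
      ← Lagrange.nodal_erase_eq_nodal_div (mem_univ i), Polynomial.coeff_C_mul]
    have hmon : (Lagrange.nodal (univ.erase i) μ).Monic := Lagrange.nodal_monic
    have hnd : (Lagrange.nodal (univ.erase i) μ).natDegree = ℓ - 1 := by
      rw [Lagrange.natDegree_nodal, card_erase_of_mem (mem_univ i), hcard]
    rw [← hnd, hmon.coeff_natDegree, mul_one]
  have heval : ∀ i : Fin ℓ, P.eval (μ i) = ∏ j, (μ i - ν j) := by
    intro i
    rw [hP]
    rw [Polynomial.eval_sub, Lagrange.eval_nodal, Lagrange.eval_nodal_at_node (mem_univ i),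
      sub_zero]
  have hPco : P.coeff (ℓ - 1) = (∑ i, μ i) - (∑ i, ν i) := by
    have h1 : (Lagrange.nodal (univ : Finset (Fin ℓ)) ν).coeff (ℓ - 1) = -∑ i, ν i := by
      have hnd : (Lagrange.nodal (univ : Finset (Fin ℓ)) ν).natDegree = ℓ := by
        rw [Lagrange.natDegree_nodal, hcard]
      have := Polynomial.prod_X_sub_C_nextCoeff (s := (univ : Finset (Fin ℓ))) ν
      rw [← Lagrange.nodal_eq] at this
      rwa [Polynomial.nextCoeff_of_natDegree_pos (by omega), hnd] at this
    have h2 : (Lagrange.nodal (univ : Finset (Fin ℓ)) μ).coeff (ℓ - 1) = -∑ i, μ i := by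
      have hnd : (Lagrange.nodal (univ : Finset (Fin ℓ)) μ).natDegree = ℓ := by
        rw [Lagrange.natDegree_nodal, hcard]
      have := Polynomial.prod_X_sub_C_nextCoeff (s := (univ : Finset (Fin ℓ))) μ
      rw [← Lagrange.nodal_eq] at this
      rwa [Polynomial.nextCoeff_of_natDegree_pos (by omega), hnd] at this
    rw [hP, Polynomial.coeff_sub, h1, h2]; ring
  simp only [Polynomial.coeff_C_mul, hbasis, heval] at hco
  rw [hPco] at hco
  calc ∑ i, (∏ j, (μ i - ν j)) * (∏ j ∈ univ.erase i, (μ i - μ j))⁻¹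
      = ∑ i, (∏ j, (μ i - ν j)) * Lagrange.nodalWeight univ μ i := by
        apply Finset.sum_congr rfl; intro i _
        rw [Lagrange.nodalWeight, Finset.prod_inv_distrib]
    _ = (∑ i, μ i) - (∑ i, ν i) := hco
    _ = ∑ i, (μ i - ν i) := by rw [Finset.sum_sub_distrib]

def GG {ℓ : ℕ} (x : Fin ℓ → ℚ) : ℚ :=
  ∏ i, ∏ j, if i < j then (x i - x j) / (x i + x j) else 1

def FF {ℓ : ℕ} (lam : Fin ℓ → ℕ) : ℚ :=
  ((∑ i, lam i).factorial : ℚ) / (∏ i, ((lam i).factorial : ℚ)) *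
    GG (fun i => (lam i : ℚ))

theorem GG_update_mul {ℓ : ℕ} (x : Fin ℓ → ℚ) (i : Fin ℓ) (y : ℚ) :
    GG (Function.update x i y) *
        ((∏ b ∈ univ.filter (fun b => i < b), (x i - x b) / (x i + x b)) *
         (∏ a ∈ univ.filter (fun a => a < i), (x a - x i) / (x a + x i)))
      = GG x *
        ((∏ b ∈ univ.filter (fun b => i < b), (y - x b) / (y + x b)) *
         (∏ a ∈ univ.filter (fun a => a < i), (x a - y) / (x a + y))) := by
  set x' := Function.update x i y with hx'
  have h1 := pair_split (fun a b => (x' a - x' b) / (x' a + x' b)) i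
  have h2 := pair_split (fun a b => (x a - x b) / (x a + x b)) i
  have hthird : (∏ a, ∏ b, if a < b ∧ a ≠ i ∧ b ≠ i then (x' a - x' b) / (x' a + x' b) else 1)
      = ∏ a, ∏ b, if a < b ∧ a ≠ i ∧ b ≠ i then (x a - x b) / (x a + x b) else 1 := by
    refine Finset.prod_congr rfl fun a _ => Finset.prod_congr rfl fun b _ => ?_
    by_cases h : a < b ∧ a ≠ i ∧ b ≠ i
    · rw [if_pos h, if_pos h, hx', Function.update_of_ne h.2.1, Function.update_of_ne h.2.2]
    · rw [if_neg h, if_neg h]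
  have hXp : (∏ b ∈ univ.filter (fun b => i < b), (x' i - x' b) / (x' i + x' b))
      = ∏ b ∈ univ.filter (fun b => i < b), (y - x b) / (y + x b) := by
    refine Finset.prod_congr rfl fun b hb => ?_
    have hbi : b ≠ i := by
      have := (mem_filter.mp hb).2; exact fun h => absurd this (by rw [h]; exact lt_irrefl i)
    rw [hx', Function.update_self, Function.update_of_ne hbi]
  have hYp : (∏ a ∈ univ.filter (fun a => a < i), (x' a - x' i) / (x' a + x' i))
      = ∏ a ∈ univ.filter (fun a => a < i), (x a - y) / (x a + y) := by
    refine Finset.prod_congr rfl fun a ha => ?_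
    have hai : a ≠ i := by
      have := (mem_filter.mp ha).2; exact fun h => absurd this (by rw [h]; exact lt_irrefl i)
    rw [hx', Function.update_self, Function.update_of_ne hai]
  show GG x' * _ = _
  rw [GG, GG] at *
  rw [h1, h2, hthird, hXp, hYp]
  ring

theorem factor_one (a c : ℚ) (hd : a - c ≠ 0) (hs : a + c ≠ 0) (h1 : a + c - 1 ≠ 0) :
    (a - 1 - c) / (a - 1 + c)
      = ((a - c) / (a + c)) * ((a^2 - a - (c^2 + c)) / (a^2 - a - (c^2 - c))) := by
  have h4 : a^2 - a - (c^2 - c) ≠ 0 := by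
    intro h
    have h5 : (a - c) * (a + c - 1) = 0 := by linear_combination h
    rcases mul_eq_zero.mp h5 with h6 | h6
    · exact hd h6
    · exact h1 h6
  have h5 : a - 1 + c ≠ 0 := by intro h; apply h1; linarith
  rw [div_mul_div_comm, div_eq_div_iff h5 (mul_ne_zero hs h4)]
  ring

theorem factor_two (a c : ℚ) (hd : c - a ≠ 0) (hs : c + a ≠ 0) (h1 : a + c - 1 ≠ 0) :
    (c - (a - 1)) / (c + (a - 1))
      = ((c - a) / (c + a)) * ((a^2 - a - (c^2 + c)) / (a^2 - a - (c^2 - c))) := by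
  have h4 : a^2 - a - (c^2 - c) ≠ 0 := by
    intro h
    have h5 : (c - a) * (a + c - 1) = 0 := by linear_combination -h
    rcases mul_eq_zero.mp h5 with h6 | h6
    · exact hd h6
    · exact h1 h6
  have h5 : c + (a - 1) ≠ 0 := by intro h; apply h1; linarith
  rw [div_mul_div_comm, div_eq_div_iff h5 (mul_ne_zero hs h4)]
  ring

/-- ratio of GG under decreasing one coordinate by 1 -/
theorem GG_update {ℓ : ℕ} (x : Fin ℓ → ℚ) (i : Fin ℓ)
    (hd : ∀ j, j ≠ i → x i - x j ≠ 0)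
    (hs : ∀ j, j ≠ i → x i + x j ≠ 0)
    (h1 : ∀ j, j ≠ i → x i + x j - 1 ≠ 0) :
    GG (Function.update x i (x i - 1))
      = GG x * ∏ j ∈ univ.erase i,
          ((x i)^2 - x i - ((x j)^2 + x j)) / ((x i)^2 - x i - ((x j)^2 - x j)) := by
  set r : Fin ℓ → ℚ :=
    fun j => ((x i)^2 - x i - ((x j)^2 + x j)) / ((x i)^2 - x i - ((x j)^2 - x j)) with hr
  have hmem1 : ∀ b ∈ univ.filter (fun b => i < b), b ≠ i :=
    fun b hb h => absurd (mem_filter.mp hb).2 (by rw [h]; exact lt_irrefl i)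
  have hmem2 : ∀ a ∈ univ.filter (fun a => a < i), a ≠ i :=
    fun a ha h => absurd (mem_filter.mp ha).2 (by rw [h]; exact lt_irrefl i)
  have key := GG_update_mul x i (x i - 1)
  have hX' : (∏ b ∈ univ.filter (fun b => i < b), (x i - 1 - x b) / (x i - 1 + x b))
      = (∏ b ∈ univ.filter (fun b => i < b), (x i - x b) / (x i + x b)) *
        ∏ b ∈ univ.filter (fun b => i < b), r b := by
    rw [← Finset.prod_mul_distrib]
    refine Finset.prod_congr rfl fun b hb => ?_
    exact factor_one (x i) (x b) (hd b (hmem1 b hb)) (hs b (hmem1 b hb)) (h1 b (hmem1 b hb))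
  have hY' : (∏ a ∈ univ.filter (fun a => a < i), (x a - (x i - 1)) / (x a + (x i - 1)))
      = (∏ a ∈ univ.filter (fun a => a < i), (x a - x i) / (x a + x i)) *
        ∏ a ∈ univ.filter (fun a => a < i), r a := by
    rw [← Finset.prod_mul_distrib]
    refine Finset.prod_congr rfl fun a ha => ?_
    have h := hmem2 a ha
    have : x a - x i ≠ 0 := fun hh => hd a h (by linarith [sub_eq_zero.mp hh])
    exact factor_two (x i) (x a)
      (sub_ne_zero.mpr fun hh => (hd a h) (by rw [hh, sub_self]))
      (by rw [add_comm]; exact hs a h) (h1 a h)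
  rw [hX', hY'] at key
  have hXY : (∏ b ∈ univ.filter (fun b => i < b), (x i - x b) / (x i + x b)) *
      (∏ a ∈ univ.filter (fun a => a < i), (x a - x i) / (x a + x i)) ≠ 0 := by
    apply mul_ne_zero
    · rw [Finset.prod_ne_zero_iff]
      intro b hb
      exact div_ne_zero (hd b (hmem1 b hb)) (hs b (hmem1 b hb))
    · rw [Finset.prod_ne_zero_iff]
      intro a ha
      refine div_ne_zero (fun hh => hd a (hmem2 a ha) ?_) (by rw [add_comm]; exact hs a (hmem2 a ha))
      rw [sub_eq_zero.mp hh, sub_self]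
  apply mul_right_cancel₀ hXY
  rw [key, prod_erase_split i r]
  ring

set_option maxHeartbeats 1000000 in
theorem FF_update {ℓ : ℕ} (lam : Fin ℓ → ℕ) (hanti : StrictAnti lam)
    (hpos : ∀ i, 0 < lam i) (i : Fin ℓ) :
    FF (Function.update lam i (lam i - 1))
      = FF lam * ((lam i : ℚ) / ((∑ j, lam j : ℕ) : ℚ)) *
        ∏ j ∈ univ.erase i,
          (((lam i : ℚ))^2 - (lam i : ℚ) - (((lam j : ℚ))^2 + (lam j : ℚ))) /
          (((lam i : ℚ))^2 - (lam i : ℚ) - (((lam j : ℚ))^2 - (lam j : ℚ))) := by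
  set x : Fin ℓ → ℚ := fun j => (lam j : ℚ) with hx
  set n : ℕ := ∑ j, lam j with hn
  have hxpos : ∀ j, (0:ℚ) < x j := fun j => by simp only [hx]; exact_mod_cast hpos j
  have hxd : ∀ j, j ≠ i → x i - x j ≠ 0 := by
    intro j hj
    have : lam i ≠ lam j := fun h => hj (hanti.injective h).symm
    refine sub_ne_zero.mpr (fun h => this ?_)
    simp only [hx] at h
    exact_mod_cast h
  have hxs2 : ∀ j, j ≠ i → (2:ℚ) ≤ x i + x j := by
    intro j _
    have : 2 ≤ lam i + lam j := by have := hpos i; have := hpos j; omega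
    simp only [hx]
    exact_mod_cast this
  have hxs : ∀ j, j ≠ i → x i + x j ≠ 0 := fun j hj => by have := hxs2 j hj; intro h; linarith
  have hx1 : ∀ j, j ≠ i → x i + x j - 1 ≠ 0 := fun j hj => by have := hxs2 j hj; intro h; linarith
  have hnpos : 0 < n := by
    rw [hn]
    exact Finset.sum_pos (fun j _ => hpos j) ⟨i, mem_univ i⟩
  -- cast of the updated function
  have hcast : (fun j => ((Function.update lam i (lam i - 1)) j : ℚ))
      = Function.update x i (x i - 1) := by
    funext j
    by_cases h : j = i
    · subst h
      rw [Function.update_self, Function.update_self]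
      have : (1:ℕ) ≤ lam j := hpos j
      push_cast [Nat.cast_sub this]
      ring
    · rw [Function.update_of_ne h, Function.update_of_ne h]
  -- sum of updated
  have hsum : (∑ j, Function.update lam i (lam i - 1) j) = n - 1 := by
    rw [Finset.sum_update_of_mem (mem_univ i)]
    have h2 : lam i + ∑ j ∈ univ.erase i, lam j = n := Finset.add_sum_erase univ lam (mem_univ i)
    rw [Finset.sdiff_singleton_eq_erase]
    have h3 := hpos i
    omega
  -- factorial identities
  have hfac1 : (((n-1).factorial : ℚ)) * n = (n.factorial : ℚ) := by
    have h := Nat.mul_factorial_pred hnpos.ne'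
    rw [mul_comm] at h
    exact_mod_cast h
  have hupdfac : (fun j => (((Function.update lam i (lam i - 1)) j).factorial : ℚ))
      = Function.update (fun j => ((lam j).factorial : ℚ)) i (((lam i - 1).factorial : ℚ)) := by
    funext j
    by_cases h : j = i
    · subst h; rw [Function.update_self, Function.update_self]
    · rw [Function.update_of_ne h, Function.update_of_ne h]
  have hfac2 : (∏ j, (((Function.update lam i (lam i - 1)) j).factorial : ℚ)) * (lam i : ℚ)
      = ∏ j, ((lam j).factorial : ℚ) := by
    rw [hupdfac, Finset.prod_update_of_mem (mem_univ i), Finset.sdiff_singleton_eq_erase,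
      ← Finset.mul_prod_erase univ (fun j => ((lam j).factorial : ℚ)) (mem_univ i)]
    have h : ((lam i - 1).factorial : ℚ) * (lam i : ℚ) = ((lam i).factorial : ℚ) := by
      have h2 := Nat.mul_factorial_pred (hpos i).ne'
      rw [mul_comm] at h2
      exact_mod_cast h2
    rw [mul_right_comm, h]
  have hP1 : (∏ j, (((Function.update lam i (lam i - 1)) j).factorial : ℚ)) ≠ 0 := by
    rw [Finset.prod_ne_zero_iff]
    intro j _
    exact_mod_cast (Nat.factorial_pos _).ne'
  have hxine : (lam i : ℚ) ≠ 0 := by exact_mod_cast (hpos i).ne'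
  have hnne : ((n : ℕ) : ℚ) ≠ 0 := by exact_mod_cast hnpos.ne'
  rw [FF, FF, hsum, hcast, GG_update x i hxd hxs hx1]
  simp only [hx]
  rw [← hfac1, ← hfac2]
  set R : ℚ := ∏ j ∈ univ.erase i,
      ((lam i : ℚ)^2 - (lam i : ℚ) - ((lam j : ℚ)^2 + (lam j : ℚ))) /
      ((lam i : ℚ)^2 - (lam i : ℚ) - ((lam j : ℚ)^2 - (lam j : ℚ))) with hR
  field_simp

theorem FF_rec {ℓ : ℕ} (lam : Fin ℓ → ℕ) (hanti : StrictAnti lam)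
    (hpos : ∀ i, 0 < lam i) (hl : 0 < ℓ) :
    FF lam = ∑ i, FF (Function.update lam i (lam i - 1)) := by
  have hge1 : ∀ j, (1:ℚ) ≤ (lam j : ℚ) := fun j => by exact_mod_cast hpos j
  have hμinj : Function.Injective (fun j : Fin ℓ => (lam j : ℚ)^2 - (lam j : ℚ)) := by
    intro a b h
    simp only at h
    have h2 : ((lam a : ℚ) - (lam b : ℚ)) * ((lam a : ℚ) + (lam b : ℚ) - 1) = 0 := by
      linear_combination h
    rcases mul_eq_zero.mp h2 with h3 | h3
    · have : (lam a : ℚ) = (lam b : ℚ) := by linarith [sub_eq_zero.mp h3]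
      exact hanti.injective (by exact_mod_cast this)
    · have := hge1 a; have := hge1 b; linarith
  have lag := lagrange_sum (fun j : Fin ℓ => (lam j : ℚ)^2 - (lam j : ℚ))
    (fun j : Fin ℓ => (lam j : ℚ)^2 + (lam j : ℚ)) hμinj
  have hnpos : 0 < ∑ j, lam j := Finset.sum_pos (fun j _ => hpos j) ⟨⟨0, hl⟩, mem_univ _⟩
  have hnne : ((∑ j, lam j : ℕ) : ℚ) ≠ 0 := by exact_mod_cast hnpos.ne'
  have key : ∀ i : Fin ℓ, (lam i : ℚ) *
      ∏ j ∈ univ.erase i,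
        (((lam i : ℚ))^2 - (lam i : ℚ) - (((lam j : ℚ))^2 + (lam j : ℚ))) /
        (((lam i : ℚ))^2 - (lam i : ℚ) - (((lam j : ℚ))^2 - (lam j : ℚ)))
      = (-(1:ℚ)/2) * ((∏ j, ((lam i : ℚ)^2 - (lam i : ℚ) - ((lam j : ℚ)^2 + (lam j : ℚ)))) *
          (∏ j ∈ univ.erase i, ((lam i : ℚ)^2 - (lam i : ℚ) - ((lam j : ℚ)^2 - (lam j : ℚ))))⁻¹) := by
    intro i
    rw [Finset.prod_div_distrib,
      ← Finset.mul_prod_erase univ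
        (fun j => (lam i : ℚ)^2 - (lam i : ℚ) - ((lam j : ℚ)^2 + (lam j : ℚ))) (mem_univ i)]
    have h5 : (lam i : ℚ)^2 - (lam i : ℚ) - ((lam i : ℚ)^2 + (lam i : ℚ)) = -2 * (lam i : ℚ) := by
      ring
    rw [h5, div_eq_mul_inv]
    ring
  calc FF lam
      = ∑ i, FF lam * ((lam i : ℚ) / ((∑ j, lam j : ℕ) : ℚ)) *
          ∏ j ∈ univ.erase i,
            (((lam i : ℚ))^2 - (lam i : ℚ) - (((lam j : ℚ))^2 + (lam j : ℚ))) /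
            (((lam i : ℚ))^2 - (lam i : ℚ) - (((lam j : ℚ))^2 - (lam j : ℚ))) := by
        have step1 : ∀ i : Fin ℓ, FF lam * ((lam i : ℚ) / ((∑ j, lam j : ℕ) : ℚ)) *
            ∏ j ∈ univ.erase i,
              (((lam i : ℚ))^2 - (lam i : ℚ) - (((lam j : ℚ))^2 + (lam j : ℚ))) /
              (((lam i : ℚ))^2 - (lam i : ℚ) - (((lam j : ℚ))^2 - (lam j : ℚ)))
            = (FF lam / ((∑ j, lam j : ℕ) : ℚ)) *
              ((lam i : ℚ) * ∏ j ∈ univ.erase i,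
              (((lam i : ℚ))^2 - (lam i : ℚ) - (((lam j : ℚ))^2 + (lam j : ℚ))) /
              (((lam i : ℚ))^2 - (lam i : ℚ) - (((lam j : ℚ))^2 - (lam j : ℚ)))) := by
          intro i; ring
        rw [Finset.sum_congr rfl fun i _ => step1 i, ← Finset.mul_sum]
        rw [Finset.sum_congr rfl fun i _ => key i, ← Finset.mul_sum, lag]
        have h6 : ∑ i, ((lam i : ℚ)^2 - (lam i : ℚ) - ((lam i : ℚ)^2 + (lam i : ℚ)))
            = -2 * ((∑ j, lam j : ℕ) : ℚ) := by
          have h7 : ∀ i : Fin ℓ, ((lam i : ℚ)^2 - (lam i : ℚ) - ((lam i : ℚ)^2 + (lam i : ℚ)))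
              = -2 * (lam i : ℚ) := fun i => by ring
          rw [Finset.sum_congr rfl fun i _ => h7 i, ← Finset.mul_sum, Nat.cast_sum]
        rw [h6]
        have h8 : (-1/2 : ℚ) * (-2 * ((∑ j, lam j : ℕ) : ℚ)) = ((∑ j, lam j : ℕ) : ℚ) := by ring
        rw [h8, div_mul_eq_mul_div, mul_div_assoc, div_self hnne, mul_one]
    _ = ∑ i, FF (Function.update lam i (lam i - 1)) :=
        (Finset.sum_congr rfl fun i _ => (FF_update lam hanti hpos i).symm)

theorem GG_snoc_zero {m : ℕ} (x : Fin m → ℚ) (hx : ∀ i, x i ≠ 0) :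
    GG (Fin.snoc x (0:ℚ)) = GG x := by
  have hnl : ∀ j : Fin m, ¬ (Fin.last m < j.castSucc) :=
    fun j => not_lt.mpr (le_of_lt (Fin.castSucc_lt_last j))
  rw [GG, GG]
  simp only [Fin.prod_univ_castSucc, Fin.castSucc_lt_castSucc_iff, Fin.snoc_castSucc,
    Fin.snoc_last, Fin.castSucc_lt_last, if_true, lt_self_iff_false, if_false, sub_zero,
    add_zero, hnl, Finset.prod_const_one, mul_one]
  refine Finset.prod_congr rfl fun i _ => ?_
  rw [div_self (hx i), mul_one]

theorem FF_snoc_zero {m : ℕ} (g : Fin m → ℕ) (hg : ∀ j, 0 < g j) :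
    FF (Fin.snoc g (0:ℕ)) = FF g := by
  rw [FF, FF]
  have h1 : (∑ i : Fin (m+1), (Fin.snoc g (0:ℕ) : Fin (m+1) → ℕ) i) = ∑ i, g i := by
    rw [Fin.sum_univ_castSucc]
    simp [Fin.snoc_castSucc, Fin.snoc_last]
  have h2 : (∏ i : Fin (m+1), (((Fin.snoc g (0:ℕ) : Fin (m+1) → ℕ) i).factorial : ℚ))
      = ∏ i, ((g i).factorial : ℚ) := by
    rw [Fin.prod_univ_castSucc]
    simp [Fin.snoc_castSucc, Fin.snoc_last]
  have h3 : (fun i : Fin (m+1) => ((Fin.snoc g (0:ℕ) : Fin (m+1) → ℕ) i : ℚ))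
      = Fin.snoc (fun i => (g i : ℚ)) (0:ℚ) := by
    funext i
    refine Fin.lastCases ?_ (fun j => ?_) i
    · rw [Fin.snoc_last, Fin.snoc_last]; norm_num
    · rw [Fin.snoc_castSucc, Fin.snoc_castSucc]
  rw [h1, h2, h3, GG_snoc_zero _ (fun i => by exact_mod_cast (hg i).ne')]

theorem FF_eq_zero_of_eq {ℓ : ℕ} (lam' : Fin ℓ → ℕ) {i j : Fin ℓ} (hij : i < j)
    (heq : lam' i = lam' j) : FF lam' = 0 := by
  rw [FF]
  apply mul_eq_zero_of_right
  rw [GG]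
  apply Finset.prod_eq_zero (mem_univ i)
  apply Finset.prod_eq_zero (mem_univ j)
  rw [if_pos hij]
  have : ((lam' i : ℚ) - (lam' j : ℚ)) = 0 := by rw [heq, sub_self]
  rw [this, zero_div]

theorem strictAnti_update {ℓ : ℕ} {lam : Fin ℓ → ℕ} (h : StrictAnti lam) (i : Fin ℓ) (v : ℕ)
    (h1 : ∀ j, j < i → v < lam j) (h2 : ∀ j, i < j → lam j < v) :
    StrictAnti (Function.update lam i v) := by
  intro a b hab
  rcases eq_or_ne a i with rfl | ha
  · rw [Function.update_self, Function.update_of_ne hab.ne']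
    exact h2 b hab
  · rcases eq_or_ne b i with rfl | hb
    · rw [Function.update_self, Function.update_of_ne ha]
      exact h1 a hab
    · rw [Function.update_of_ne ha, Function.update_of_ne hb]
      exact h hab

theorem sum_update_pred {ℓ : ℕ} (lam : Fin ℓ → ℕ) (i : Fin ℓ) (hpos : 0 < lam i) :
    ∑ j, Function.update lam i (lam i - 1) j = (∑ j, lam j) - 1 := by
  rw [Finset.sum_update_of_mem (mem_univ i), Finset.sdiff_singleton_eq_erase]
  have h2 : lam i + ∑ j ∈ univ.erase i, lam j = ∑ j, lam j :=
    Finset.add_sum_erase univ lam (mem_univ i)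
  omega

theorem FF_main : ∀ (n ℓ : ℕ) (lam : Fin ℓ → ℕ), StrictAnti lam → (∀ i, 0 < lam i) →
    (∑ i, lam i) = n → ∃ m : ℕ, 0 < m ∧ (m : ℚ) = FF lam := by
  intro n
  induction n using Nat.strong_induction_on with
  | _ n ih =>
  intro ℓ lam hanti hpos hsum
  rcases Nat.eq_zero_or_pos n with rfl | hn
  · have hℓ : ℓ = 0 := by
      by_contra h
      have i0 : Fin ℓ := ⟨0, Nat.pos_of_ne_zero h⟩
      have h0 := Finset.sum_eq_zero_iff.mp hsum i0 (mem_univ _)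
      exact absurd h0 (hpos i0).ne'
    subst hℓ
    refine ⟨1, one_pos, ?_⟩
    simp [FF, GG]
  · have hl : 0 < ℓ := by
      rcases Nat.eq_zero_or_pos ℓ with rfl | h
      · simp at hsum; omega
      · exact h
    obtain ⟨k, rfl⟩ : ∃ k, ℓ = k + 1 := ⟨ℓ - 1, by omega⟩
    have hterm : ∀ i : Fin (k+1), ∃ mi : ℕ,
        (mi : ℚ) = FF (Function.update lam i (lam i - 1)) ∧ (i = Fin.last k → 0 < mi) := by
      intro i
      rcases lt_or_eq_of_le (Nat.lt_succ_iff.mp i.isLt) with hik | hik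
      · -- i is not the last index
        set i' : Fin (k+1) := ⟨i.val + 1, by omega⟩ with hi'
        have hlt : i < i' := by rw [Fin.lt_def]; simp [hi']
        have hstep : lam i' < lam i := hanti hlt
        have hne_last : i ≠ Fin.last k := by
          intro h; rw [Fin.ext_iff] at h; simp at h; omega
        rcases eq_or_lt_of_le (by omega : lam i' ≤ lam i - 1) with heq | hgt
        · refine ⟨0, ?_, fun h => absurd h hne_last⟩
          have hupd : Function.update lam i (lam i - 1) i
              = Function.update lam i (lam i - 1) i' := by
            rw [Function.update_self, Function.update_of_ne (Fin.ne_of_gt hlt)]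
            omega
          rw [FF_eq_zero_of_eq _ hlt hupd, Nat.cast_zero]
        · -- valid removal, use induction hypothesis
          have hanti' : StrictAnti (Function.update lam i (lam i - 1)) := by
            refine strictAnti_update hanti i _ (fun j hj => ?_) (fun j hj => ?_)
            · have := hanti hj; omega
            · have hle : i' ≤ j := by rw [Fin.le_def]; rw [Fin.lt_def] at hj; simp [hi']; omega
              have := hanti.antitone hle; omega
          have hpos' : ∀ j, 0 < Function.update lam i (lam i - 1) j := by
            intro j
            rcases eq_or_ne j i with rfl | h
            · rw [Function.update_self]; have := hpos i'; omega
            · rw [Function.update_of_ne h]; exact hpos j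
          have hsum' : ∑ j, Function.update lam i (lam i - 1) j = n - 1 := by
            rw [sum_update_pred lam i (hpos i), hsum]
          obtain ⟨m, hm0, hmF⟩ := ih (n-1) (by omega) _ _ hanti' hpos' hsum'
          exact ⟨m, hmF, fun _ => hm0⟩
      · -- i is the last index
        have hilast : i = Fin.last k := Fin.ext (by simpa using hik)
        rcases (by have := hpos i; omega : lam i = 1 ∨ 2 ≤ lam i) with h1 | h2
        · -- last part equals 1 : removal gives trailing zero
          set g : Fin k → ℕ := fun j => lam j.castSucc with hg
          have hupd_eq : Function.update lam i (lam i - 1)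
              = Fin.snoc g (0:ℕ) := by
            funext j
            refine Fin.lastCases ?_ (fun j' => ?_) j
            · rw [Fin.snoc_last, ← hilast, Function.update_self, h1]
            · have hne : j'.castSucc ≠ i := by
                rw [hilast]; exact (Fin.castSucc_lt_last j').ne
              rw [Function.update_of_ne hne, Fin.snoc_castSucc]
          have hganti : StrictAnti g := fun a b hab =>
            hanti (by exact Fin.castSucc_lt_castSucc_iff.mpr hab)
          have hgpos : ∀ j, 0 < g j := fun j => hpos _
          have hgsum : ∑ j, g j = n - 1 := by
            have h3 : ∑ j : Fin (k+1), lam j = (∑ j : Fin k, g j) + lam (Fin.last k) :=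
              Fin.sum_univ_castSucc lam
            rw [← hilast] at h3
            omega
          obtain ⟨m, hm0, hmF⟩ := ih (n-1) (by omega) _ _ hganti hgpos hgsum
          refine ⟨m, ?_, fun _ => hm0⟩
          rw [hupd_eq, FF_snoc_zero g hgpos]
          exact hmF
        · -- last part at least 2
          have hanti' : StrictAnti (Function.update lam i (lam i - 1)) := by
            refine strictAnti_update hanti i _ (fun j hj => ?_) (fun j hj => ?_)
            · have := hanti hj; omega
            · rw [hilast] at hj
              exact absurd hj (not_lt.mpr (Fin.le_last j))
          have hpos' : ∀ j, 0 < Function.update lam i (lam i - 1) j := by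
            intro j
            rcases eq_or_ne j i with rfl | h
            · rw [Function.update_self]; omega
            · rw [Function.update_of_ne h]; exact hpos j
          have hsum' : ∑ j, Function.update lam i (lam i - 1) j = n - 1 := by
            rw [sum_update_pred lam i (hpos i), hsum]
          obtain ⟨m, hm0, hmF⟩ := ih (n-1) (by omega) _ _ hanti' hpos' hsum'
          exact ⟨m, hmF, fun _ => hm0⟩
    choose mf hmf hmfpos using hterm
    refine ⟨∑ i, mf i, ?_, ?_⟩
    · exact Finset.sum_pos' (fun i _ => Nat.zero_le _) ⟨Fin.last k, mem_univ _, hmfpos _ rfl⟩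
    · rw [FF_rec lam hanti hpos (by omega), Nat.cast_sum]
      exact Finset.sum_congr rfl fun i _ => hmf i

/-- For a strict partition `λ = (λ₁ > ⋯ > λ_ℓ > 0)`, the quantity
`n_λ = (|λ|!/(λ₁!⋯λ_ℓ!)) ∏_{i<j} (λᵢ-λⱼ)/(λᵢ+λⱼ)` is a positive integer. -/
theorem shifted_tableau_number_is_positive_integer
    (ℓ : ℕ) (lam : Fin ℓ → ℕ) (hanti : StrictAnti lam) (hpos : ∀ i, 0 < lam i) :
    ∃ m : ℕ, 0 < m ∧
      (m : ℚ) =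
        ((∑ i, lam i).factorial : ℚ) / (∏ i, ((lam i).factorial : ℚ)) *
          ∏ i : Fin ℓ, ∏ j : Fin ℓ,
            if i < j then ((lam i : ℚ) - (lam j : ℚ)) / ((lam i : ℚ) + (lam j : ℚ)) else 1 := by
  obtain ⟨m, hm0, hmF⟩ := FF_main (∑ i, lam i) ℓ lam hanti hpos rfl
  exact ⟨m, hm0, hmF⟩
end

section
/- For a strict partition λ of length ℓ ≤ n and a sequence a = (a₁, a₂, ...), the function Q_λ(x₁,...,xₙ | a) := (2^ℓ/(n−ℓ)!) · ∑_{σ ∈ Sₙ} [∏_{i=1}^{ℓ} (x_{σ(i)} | a)^{λ_i} · ∏_{i ≤ ℓ, i < j ≤ n} (x_{σ(i)} + x_{σ(j)})/(x_{σ(i)} − x_{σ(j)})] is a polynomial in x₁,...,xₙ. -/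
open MvPolynomial

/-- A strict partition of length at most `n`. -/
structure SPartition (n : ℕ) where
  len : ℕ
  len_le : len ≤ n
  part : Fin len → ℕ
  anti : StrictAnti part
  pos : ∀ i, 0 < part i

namespace SPartition

/-- `|λ| = λ₁ + ⋯ + λ_ℓ`. -/
def size {n : ℕ} (l : SPartition n) : ℕ := ∑ i, l.part i

/-- λ padded with zeros to length `n`. -/
def padN {n : ℕ} (l : SPartition n) : Fin n → ℕ :=
  fun i => if h : (i : ℕ) < l.len then l.part ⟨i, h⟩ else 0

/-- λ padded with zeros, as a point of `ℂⁿ`. -/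
noncomputable def padC {n : ℕ} (l : SPartition n) : Fin n → ℂ := fun i => (l.padN i : ℂ)

end SPartition

/-- A polynomial in `n` variables is Q-symmetric if it is symmetric and (when `n ≥ 2`)
the substitution `x₁ = t`, `x₂ = -t` yields a result independent of `t`. -/
def QSym {n : ℕ} (p : MvPolynomial (Fin n) ℂ) : Prop :=
  (∀ σ : Equiv.Perm (Fin n), MvPolynomial.rename σ p = p) ∧
  ∀ (_ : 2 ≤ n) (t s : ℂ) (x : Fin n → ℂ),
    MvPolynomial.eval
      (fun i : Fin n => if (i : ℕ) = 0 then t else if (i : ℕ) = 1 then -t else x i) p =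
    MvPolynomial.eval
      (fun i : Fin n => if (i : ℕ) = 0 then s else if (i : ℕ) = 1 then -s else x i) p

/-- The generalized power `(x | a)^k = ∏_{i=1}^k (x - a_i)`. -/
noncomputable def genPow (a : ℕ → ℂ) (k : ℕ) (x : ℂ) : ℂ :=
  ∏ i ∈ Finset.range k, (x - a i)

/-- The rational expression
`(2^ℓ/(n-ℓ)!) ∑_{σ ∈ Sₙ} ∏ᵢ (x_{σ(i)}|a)^{λᵢ} ∏_{i≤ℓ, i<j≤n} (x_{σ(i)}+x_{σ(j)})/(x_{σ(i)}-x_{σ(j)})`. -/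
noncomputable def QFormula {n : ℕ} (lam : SPartition n) (a : ℕ → ℂ) (x : Fin n → ℂ) : ℂ :=
  ((2 : ℂ) ^ lam.len / ((n - lam.len).factorial : ℂ)) *
    ∑ σ : Equiv.Perm (Fin n),
      (∏ i : Fin lam.len, genPow a (lam.part i) (x (σ (Fin.castLE lam.len_le i)))) *
      ∏ i : Fin lam.len, ∏ j : Fin n,
        if (i : ℕ) < (j : ℕ) then
          (x (σ (Fin.castLE lam.len_le i)) + x (σ j)) /
            (x (σ (Fin.castLE lam.len_le i)) - x (σ j))
        else 1

/-- `P` represents the function `QFormula lam a` (wherever the denominators are nonzero,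
i.e. at points with pairwise distinct coordinates). -/
def IsQPoly {n : ℕ} (lam : SPartition n) (a : ℕ → ℂ) (P : MvPolynomial (Fin n) ℂ) : Prop :=
  ∀ x : Fin n → ℂ, Function.Injective x → MvPolynomial.eval x P = QFormula lam a x

/-- The sequence `(0,0,0,…)`; `Q_λ = Q_λ(·|0)` is the classical Schur Q-function. -/
noncomputable def zeroSeq : ℕ → ℂ := fun _ => 0

/-- The sequence `δ = (0,1,2,…)`; `Q*_λ = Q_λ(·|δ)` is the factorial Schur Q-function. -/
noncomputable def deltaSeq : ℕ → ℂ := fun i => (i : ℂ)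

/-- `H(λ) = λ₁!⋯λ_ℓ! ∏_{i<j≤ℓ} (λᵢ+λⱼ)/(λᵢ-λⱼ)`. -/
noncomputable def Hval {n : ℕ} (lam : SPartition n) : ℂ :=
  (∏ i : Fin lam.len, ((lam.part i).factorial : ℂ)) *
    ∏ i : Fin lam.len, ∏ j : Fin lam.len,
      if i < j then
        ((lam.part i : ℂ) + (lam.part j : ℂ)) / ((lam.part i : ℂ) - (lam.part j : ℂ))
      else 1


section Aux

open Finset

variable {n : ℕ}

/-- The complex sign of a permutation. -/
noncomputable def sgn (σ : Equiv.Perm (Fin n)) : ℂ := ((Equiv.Perm.sign σ : ℤ) : ℂ)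

lemma sgn_mul_self (σ : Equiv.Perm (Fin n)) : sgn σ * sgn σ = 1 := by
  unfold sgn
  rcases Int.units_eq_one_or (Equiv.Perm.sign σ) with h | h <;> rw [h] <;> norm_num

/-- substitution sending `X j` to `X i`, fixing others -/
noncomputable def subXji (i j : Fin n) : MvPolynomial (Fin n) ℂ →ₐ[ℂ] MvPolynomial (Fin n) ℂ :=
  aeval (fun k => if k = j then X i else X k)

lemma subXji_comp_mk (i j : Fin n) :
    (Ideal.Quotient.mkₐ ℂ (Ideal.span {(X i - X j : MvPolynomial (Fin n) ℂ)})).comp (subXji i j)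
      = Ideal.Quotient.mkₐ ℂ (Ideal.span {(X i - X j : MvPolynomial (Fin n) ℂ)}) := by
  apply MvPolynomial.algHom_ext
  intro k
  simp only [AlgHom.comp_apply, subXji, aeval_X, Ideal.Quotient.mkₐ_eq_mk]
  by_cases hk : k = j
  · rw [if_pos hk, hk, Ideal.Quotient.eq]
    exact Ideal.subset_span rfl
  · simp [hk]

lemma dvd_of_subXji (i j : Fin n) (p : MvPolynomial (Fin n) ℂ)
    (hp : subXji i j p = 0) : (X i - X j : MvPolynomial (Fin n) ℂ) ∣ p := by
  have h := congrArg (fun f => f p) (subXji_comp_mk i j)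
  simp only [AlgHom.comp_apply, hp, map_zero, Ideal.Quotient.mkₐ_eq_mk] at h
  rw [← Ideal.mem_span_singleton, ← Ideal.Quotient.eq_zero_iff_mem]
  exact h.symm

lemma subXji_XsubX (i j : Fin n) (hij : i ≠ j) :
    subXji i j (X i - X j) = 0 := by
  simp [subXji, hij]

lemma span_eq_ker (i j : Fin n) (hij : i ≠ j) :
    Ideal.span {(X i - X j : MvPolynomial (Fin n) ℂ)} = RingHom.ker (subXji i j).toRingHom := by
  apply le_antisymm
  · rw [Ideal.span_le]
    intro q hq
    rcases hq with rfl
    exact subXji_XsubX i j hij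
  · intro p hp
    rw [Ideal.mem_span_singleton]
    exact dvd_of_subXji i j p hp

lemma prime_XsubX (i j : Fin n) (hij : i ≠ j) :
    Prime (X i - X j : MvPolynomial (Fin n) ℂ) := by
  have hne : (X i - X j : MvPolynomial (Fin n) ℂ) ≠ 0 := by
    intro h
    have := congrArg (eval (fun k => if k = i then (1:ℂ) else 0)) h
    simp [hij.symm] at this
  rw [← Ideal.span_singleton_prime hne, span_eq_ker i j hij]
  exact RingHom.ker_isPrime _

lemma not_dvd_XsubX {i j k l : Fin n} (hij : i < j) (hkl : k < l) (hne : (i,j) ≠ (k,l)) :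
    ¬ ((X i - X j : MvPolynomial (Fin n) ℂ) ∣ (X k - X l)) := by
  rintro ⟨r, hr⟩
  obtain ⟨x, h1, h2⟩ : ∃ x : Fin n → ℂ, x i = x j ∧ x k ≠ x l := by
    by_cases hk : k ≠ i ∧ k ≠ j
    · refine ⟨fun m => if m = k then 1 else 0, by simp [Ne.symm hk.1, Ne.symm hk.2], ?_⟩
      simp [hkl.ne']
    · have hl : l ≠ i ∧ l ≠ j := by
        push_neg at hk
        by_cases hki : k = i
        · subst hki
          refine ⟨hkl.ne', fun h => hne ?_⟩
          subst h; rfl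
        · have hkj : k = j := hk hki
          subst hkj
          exact ⟨(hij.trans hkl).ne', hkl.ne'⟩
      refine ⟨fun m => if m = l then 1 else 0, by simp [Ne.symm hl.1, Ne.symm hl.2], ?_⟩
      simp [hkl.ne]
  have h := congrArg (eval x) hr
  simp only [map_sub, map_mul, eval_X, h1, sub_self, zero_mul] at h
  exact h2 (sub_eq_zero.mp h)

lemma prod_XsubX_dvd (S : Finset (Fin n × Fin n)) (hS : ∀ p ∈ S, p.1 < p.2)
    (A : MvPolynomial (Fin n) ℂ)
    (hdvd : ∀ p ∈ S, (X p.1 - X p.2 : MvPolynomial (Fin n) ℂ) ∣ A) :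
    (∏ p ∈ S, (X p.1 - X p.2 : MvPolynomial (Fin n) ℂ)) ∣ A := by
  classical
  induction S using Finset.induction_on with
  | empty => simp
  | insert q S' hnotmem ih =>
    have hq : q.1 < q.2 := hS q (Finset.mem_insert_self q S')
    have hprimeq := prime_XsubX q.1 q.2 hq.ne
    obtain ⟨B, hB⟩ := ih (fun p hp => hS p (Finset.mem_insert_of_mem hp))
      (fun p hp => hdvd p (Finset.mem_insert_of_mem hp))
    have hqA : (X q.1 - X q.2 : MvPolynomial (Fin n) ℂ) ∣ A :=
      hdvd q (Finset.mem_insert_self q S')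
    rw [hB] at hqA
    have hqB : (X q.1 - X q.2 : MvPolynomial (Fin n) ℂ) ∣ B := by
      rcases hprimeq.2.2 _ _ hqA with h | h
      · exfalso
        obtain ⟨p, hp, hpd⟩ := hprimeq.exists_mem_finset_dvd h
        have hp12 : p.1 < p.2 := hS p (Finset.mem_insert_of_mem hp)
        refine not_dvd_XsubX hq hp12 ?_ hpd
        intro he
        apply hnotmem
        have hqp : q = p := Prod.ext (congrArg Prod.fst he) (congrArg Prod.snd he)
        rwa [hqp]
      · exact h
    obtain ⟨Cc, hC⟩ := hqB
    rw [Finset.prod_insert hnotmem]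
    exact ⟨Cc, by rw [hB, hC]; ring⟩

lemma ite_prod_eq_Ioi (i : Fin n) (f : Fin n → ℂ) :
    ∏ j : Fin n, (if i < j then f j else 1) = ∏ j ∈ Ioi i, f j := by
  rw [← Finset.prod_filter]
  congr 1
  ext j; simp

lemma vdm_perm (σ : Equiv.Perm (Fin n)) (v : Fin n → ℂ) :
    ∏ i : Fin n, ∏ j : Fin n, (if i < j then v (σ i) - v (σ j) else 1)
      = sgn σ * ∏ i : Fin n, ∏ j : Fin n, (if i < j then v i - v j else 1) := by
  have key : ∀ w : Fin n → ℂ,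
      ∏ i : Fin n, ∏ j : Fin n, (if i < j then w i - w j else 1)
        = (∏ i : Fin n, ∏ j ∈ Ioi i, (-1 : ℂ)) * Matrix.det (Matrix.vandermonde w) := by
    intro w
    rw [Matrix.det_vandermonde, ← Finset.prod_mul_distrib]
    refine Finset.prod_congr rfl fun i _ => ?_
    rw [ite_prod_eq_Ioi, ← Finset.prod_mul_distrib]
    exact Finset.prod_congr rfl fun j _ => by ring
  have hvdm : Matrix.vandermonde (fun i => v (σ i)) = (Matrix.vandermonde v).submatrix σ id := by
    ext i j; simp [Matrix.vandermonde]
  rw [key (fun i => v (σ i)), key v, hvdm, Matrix.det_permute]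
  unfold sgn
  ring

lemma prod_castLE {M : Type*} [CommMonoid M] {ℓ : ℕ} (h : ℓ ≤ n) (g : Fin n → M)
    (hg : ∀ i : Fin n, ℓ ≤ (i : ℕ) → g i = 1) :
    ∏ i : Fin n, g i = ∏ i : Fin ℓ, g (Fin.castLE h i) := by
  classical
  have hmap : ∏ i : Fin ℓ, g (Fin.castLE h i)
      = ∏ i ∈ Finset.univ.map (Fin.castLEEmb h), g i := by
    rw [Finset.prod_map]
    rfl
  rw [hmap]
  symm
  apply Finset.prod_subset (Finset.subset_univ _)
  intro i _ hi
  apply hg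
  by_contra hlt
  push_neg at hlt
  exact hi (by simp only [Finset.mem_map]; exact ⟨⟨(i : ℕ), hlt⟩, Finset.mem_univ _, by
    ext; simp [Fin.castLEEmb]⟩)

lemma plus_minus_eq {ℓ : ℕ} (h : ℓ ≤ n) (y : Fin n → ℂ) (hy : Function.Injective y) :
    (∏ i : Fin ℓ, ∏ j : Fin n,
        if (i : ℕ) < (j : ℕ) then y (Fin.castLE h i) + y j else 1) *
      (∏ i : Fin n, ∏ j : Fin n, if i < j ∧ ℓ ≤ (i : ℕ) then y i - y j else 1)
    = (∏ i : Fin ℓ, ∏ j : Fin n,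
        if (i : ℕ) < (j : ℕ) then
          (y (Fin.castLE h i) + y j) / (y (Fin.castLE h i) - y j) else 1) *
      (∏ i : Fin n, ∏ j : Fin n, if i < j then y i - y j else 1) := by
  have hsplit : (∏ i : Fin n, ∏ j : Fin n, if i < j then y i - y j else 1)
      = (∏ i : Fin n, ∏ j : Fin n, if i < j ∧ (i : ℕ) < ℓ then y i - y j else 1) *
        (∏ i : Fin n, ∏ j : Fin n, if i < j ∧ ℓ ≤ (i : ℕ) then y i - y j else 1) := by
    rw [← Finset.prod_mul_distrib]
    refine Finset.prod_congr rfl fun i _ => ?_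
    rw [← Finset.prod_mul_distrib]
    refine Finset.prod_congr rfl fun j _ => ?_
    by_cases hij : i < j
    · by_cases hil : (i : ℕ) < ℓ
      · simp [hij, hil, Nat.not_le.mpr hil]
      · simp [hij, hil, Nat.le_of_not_lt hil]
    · simp [hij]
  have hre : (∏ i : Fin n, ∏ j : Fin n, if i < j ∧ (i : ℕ) < ℓ then y i - y j else 1)
      = ∏ i : Fin ℓ, ∏ j : Fin n,
          if (i : ℕ) < (j : ℕ) then y (Fin.castLE h i) - y j else 1 := by
    rw [prod_castLE h (fun i => ∏ j : Fin n, if i < j ∧ (i : ℕ) < ℓ then y i - y j else 1)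
      (fun i hi => Finset.prod_eq_one fun j _ => by
        rw [if_neg]; rintro ⟨-, h2⟩; exact absurd hi (Nat.not_le.mpr h2))]
    refine Finset.prod_congr rfl fun i _ => Finset.prod_congr rfl fun j _ => ?_
    have h2 : ((Fin.castLE h i : Fin n) : ℕ) < ℓ := i.2
    by_cases hij : (i : ℕ) < (j : ℕ)
    · rw [if_pos ⟨by rwa [Fin.lt_def], h2⟩, if_pos hij]
    · rw [if_neg, if_neg hij]
      rintro ⟨h1, -⟩
      exact hij (by rwa [Fin.lt_def] at h1)
  rw [hsplit, hre, ← mul_assoc]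
  congr 1
  rw [← Finset.prod_mul_distrib]
  refine Finset.prod_congr rfl fun i _ => ?_
  rw [← Finset.prod_mul_distrib]
  refine Finset.prod_congr rfl fun j _ => ?_
  by_cases hij : (i : ℕ) < (j : ℕ)
  · rw [if_pos hij, if_pos hij, if_pos hij]
    have hne : y (Fin.castLE h i) - y j ≠ 0 := by
      refine sub_ne_zero_of_ne (hy.ne ?_)
      exact Fin.ne_of_val_ne (Nat.ne_of_lt hij)
    field_simp
  · simp [hij]

/-- the polynomial `∏ᵢ (Xᵢ|a)^{λᵢ} ∏_{i<j, i≤ℓ} (Xᵢ+Xⱼ) ∏_{ℓ<i<j} (Xᵢ-Xⱼ)` -/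
noncomputable def Fpoly (lam : SPartition n) (a : ℕ → ℂ) : MvPolynomial (Fin n) ℂ :=
  (∏ i : Fin lam.len, ∏ t ∈ Finset.range (lam.part i),
      (X (Fin.castLE lam.len_le i) - MvPolynomial.C (a t))) *
  (∏ i : Fin lam.len, ∏ j : Fin n,
      if (i : ℕ) < (j : ℕ) then X (Fin.castLE lam.len_le i) + X j else 1) *
  (∏ i : Fin n, ∏ j : Fin n,
      if i < j ∧ lam.len ≤ (i : ℕ) then (X i - X j : MvPolynomial (Fin n) ℂ) else 1)

/-- the antisymmetrization `c ∑_σ sgn σ · σ(F)` -/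
noncomputable def Apoly (lam : SPartition n) (a : ℕ → ℂ) : MvPolynomial (Fin n) ℂ :=
  MvPolynomial.C ((2 : ℂ) ^ lam.len / ((n - lam.len).factorial : ℂ)) *
    ∑ σ : Equiv.Perm (Fin n), MvPolynomial.C (sgn σ) * rename σ (Fpoly lam a)

/-- the Vandermonde polynomial `∏_{i<j} (Xᵢ - Xⱼ)` -/
noncomputable def Vpoly (n : ℕ) : MvPolynomial (Fin n) ℂ :=
  ∏ i : Fin n, ∏ j : Fin n, if i < j then (X i - X j : MvPolynomial (Fin n) ℂ) else 1

lemma sgn_mul (τ σ : Equiv.Perm (Fin n)) : sgn (τ * σ) = sgn τ * sgn σ := by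
  unfold sgn
  rw [map_mul]
  push_cast
  ring

lemma rename_Apoly (lam : SPartition n) (a : ℕ → ℂ) (τ : Equiv.Perm (Fin n)) :
    rename (τ : Fin n → Fin n) (Apoly lam a) = MvPolynomial.C (sgn τ) * Apoly lam a := by
  have hterm : ∀ σ : Equiv.Perm (Fin n),
      rename (τ : Fin n → Fin n)
          (MvPolynomial.C (sgn σ) * rename (σ : Fin n → Fin n) (Fpoly lam a))
        = MvPolynomial.C (sgn σ) * rename (⇑(τ * σ)) (Fpoly lam a) := fun σ => by
    rw [map_mul, rename_C, rename_rename, Equiv.Perm.coe_mul]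
  have hsum : ∑ σ : Equiv.Perm (Fin n), MvPolynomial.C (sgn σ) * rename (⇑(τ * σ)) (Fpoly lam a)
      = ∑ σ : Equiv.Perm (Fin n),
          (MvPolynomial.C (sgn τ) * MvPolynomial.C (sgn σ)) * rename (⇑σ) (Fpoly lam a) := by
    refine Fintype.sum_equiv (Equiv.mulLeft τ) _ _ fun σ => ?_
    simp only [Equiv.coe_mulLeft]
    rw [← MvPolynomial.C_mul, sgn_mul]
    congr 2
    rw [← mul_assoc, sgn_mul_self, one_mul]
  unfold Apoly
  rw [map_mul, rename_C, map_sum (rename (τ : Fin n → Fin n)) _ _,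
    Finset.sum_congr rfl (fun σ _ => hterm σ), hsum]
  simp only [Finset.mul_sum]
  exact Finset.sum_congr rfl fun σ _ => by ring

lemma XsubX_dvd_Apoly (lam : SPartition n) (a : ℕ → ℂ) {i j : Fin n} (hij : i ≠ j) :
    (X i - X j : MvPolynomial (Fin n) ℂ) ∣ Apoly lam a := by
  apply dvd_of_subXji
  set g : Fin n → MvPolynomial (Fin n) ℂ := fun k => if k = j then X i else X k with hg
  have hgs : g ∘ (Equiv.swap i j : Equiv.Perm (Fin n)) = g := by
    funext k
    by_cases hki : k = i
    · subst hki
      simp [hg, Equiv.swap_apply_left, hij]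
    · by_cases hkj : k = j
      · subst hkj
        simp [hg, Equiv.swap_apply_right]
      · simp [hg, Equiv.swap_apply_of_ne_of_ne hki hkj, hki, hkj]
  have halt := rename_Apoly lam a (Equiv.swap i j)
  have hswap : sgn (Equiv.swap i j) = -1 := by
    unfold sgn
    rw [Equiv.Perm.sign_swap hij]
    norm_num
  rw [hswap] at halt
  have h1 : subXji i j (Apoly lam a)
      = subXji i j (rename (Equiv.swap i j : Fin n → Fin n) (Apoly lam a)) := by
    unfold subXji
    rw [aeval_rename, ← hg, hgs]
  rw [halt] at h1
  simp only [map_mul, map_neg, aeval_C, map_one] at h1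
  have h2 : (2 : MvPolynomial (Fin n) ℂ) * subXji i j (Apoly lam a) = 0 := by
    have := h1
    ring_nf at this ⊢
    linear_combination this
  rcases mul_eq_zero.mp h2 with h | h
  · exact absurd h two_ne_zero
  · exact h

lemma Vpoly_dvd_Apoly (lam : SPartition n) (a : ℕ → ℂ) :
    Vpoly n ∣ Apoly lam a := by
  classical
  have hV : Vpoly n = ∏ p ∈ Finset.univ.filter (fun p : Fin n × Fin n => p.1 < p.2),
      (X p.1 - X p.2 : MvPolynomial (Fin n) ℂ) := by
    rw [Finset.prod_filter, Fintype.prod_prod_type]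
    rfl
  rw [hV]
  exact prod_XsubX_dvd _ (fun p hp => (Finset.mem_filter.mp hp).2) _
    (fun p hp => XsubX_dvd_Apoly lam a ((Finset.mem_filter.mp hp).2).ne)

lemma eval_Vpoly_ne_zero {x : Fin n → ℂ} (hx : Function.Injective x) :
    MvPolynomial.eval x (Vpoly n) ≠ 0 := by
  unfold Vpoly
  rw [map_prod]
  rw [Finset.prod_ne_zero_iff]
  intro i _
  rw [map_prod, Finset.prod_ne_zero_iff]
  intro j _
  rw [apply_ite (MvPolynomial.eval x)]
  by_cases hij : i < j
  · rw [if_pos hij]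
    simp only [map_sub, eval_X]
    exact sub_ne_zero_of_ne (hx.ne hij.ne)
  · rw [if_neg hij]
    simp

lemma eval_Apoly_term (lam : SPartition n) (a : ℕ → ℂ) {x : Fin n → ℂ}
    (hx : Function.Injective x) (σ : Equiv.Perm (Fin n)) :
    MvPolynomial.eval x (MvPolynomial.C (sgn σ) * rename (σ : Fin n → Fin n) (Fpoly lam a))
      = ((∏ i : Fin lam.len, genPow a (lam.part i) (x (σ (Fin.castLE lam.len_le i)))) *
          ∏ i : Fin lam.len, ∏ j : Fin n,
            if (i : ℕ) < (j : ℕ) then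
              (x (σ (Fin.castLE lam.len_le i)) + x (σ j)) /
                (x (σ (Fin.castLE lam.len_le i)) - x (σ j))
            else 1) * MvPolynomial.eval x (Vpoly n) := by
  rw [map_mul, eval_C, eval_rename]
  set y : Fin n → ℂ := fun i => x (σ i) with hy
  have hyinj : Function.Injective y := hx.comp σ.injective
  have hFeval : MvPolynomial.eval (x ∘ σ) (Fpoly lam a)
      = (∏ i : Fin lam.len, genPow a (lam.part i) (y (Fin.castLE lam.len_le i))) *
        (∏ i : Fin lam.len, ∏ j : Fin n,
          if (i : ℕ) < (j : ℕ) then y (Fin.castLE lam.len_le i) + y j else 1) *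
        (∏ i : Fin n, ∏ j : Fin n, if i < j ∧ lam.len ≤ (i : ℕ) then y i - y j else 1) := by
    unfold Fpoly genPow
    simp only [map_mul, map_prod, map_sub, map_add, map_one, eval_X, eval_C,
      apply_ite (MvPolynomial.eval (x ∘ σ))]
    rfl
  rw [hFeval]
  have hV : MvPolynomial.eval x (Vpoly n)
      = ∏ i : Fin n, ∏ j : Fin n, if i < j then x i - x j else 1 := by
    unfold Vpoly
    simp only [map_prod, map_sub, map_one, eval_X, apply_ite (MvPolynomial.eval x)]
  have hW := vdm_perm σ x
  have hpm := plus_minus_eq lam.len_le y hyinj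
  rw [hV]
  set G := ∏ i : Fin lam.len, genPow a (lam.part i) (y (Fin.castLE lam.len_le i)) with hG
  set P := ∏ i : Fin lam.len, ∏ j : Fin n,
      if (i : ℕ) < (j : ℕ) then y (Fin.castLE lam.len_le i) + y j else 1 with hP
  set Mn := ∏ i : Fin n, ∏ j : Fin n,
      if i < j ∧ lam.len ≤ (i : ℕ) then y i - y j else 1 with hM
  set R := ∏ i : Fin lam.len, ∏ j : Fin n,
      if (i : ℕ) < (j : ℕ) then
        (y (Fin.castLE lam.len_le i) + y j) / (y (Fin.castLE lam.len_le i) - y j) else 1 with hR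
  set Wx := ∏ i : Fin n, ∏ j : Fin n, if i < j then x i - x j else 1 with hWx
  set Wy := ∏ i : Fin n, ∏ j : Fin n, if i < j then y i - y j else 1 with hWy
  have hWsign : Wy = sgn σ * Wx := hW
  have hmain : P * Mn = R * Wy := hpm
  have hstep : sgn σ * (G * P * Mn) = sgn σ * (G * (R * Wy)) := by
    rw [mul_assoc G P Mn, hmain]
  rw [hstep, hWsign]
  have hQterm : (∏ i : Fin lam.len, genPow a (lam.part i) (x (σ (Fin.castLE lam.len_le i)))) *
      (∏ i : Fin lam.len, ∏ j : Fin n,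
        if (i : ℕ) < (j : ℕ) then
          (x (σ (Fin.castLE lam.len_le i)) + x (σ j)) /
            (x (σ (Fin.castLE lam.len_le i)) - x (σ j)) else 1) = G * R := rfl
  rw [hQterm]
  linear_combination (G * R * Wx) * sgn_mul_self σ

lemma eval_Apoly (lam : SPartition n) (a : ℕ → ℂ) {x : Fin n → ℂ}
    (hx : Function.Injective x) :
    MvPolynomial.eval x (Apoly lam a) = QFormula lam a x * MvPolynomial.eval x (Vpoly n) := by
  unfold Apoly QFormula
  rw [map_mul, eval_C, map_sum (MvPolynomial.eval x) _ _,
    Finset.sum_congr rfl (fun σ _ => eval_Apoly_term lam a hx σ), ← Finset.sum_mul]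
  ring

end Aux

/-- `Q_λ(x₁,…,xₙ | a)` is (represented by) a polynomial. -/
theorem QFormula_is_polynomial (n : ℕ) (lam : SPartition n) (a : ℕ → ℂ) :
    ∃ P : MvPolynomial (Fin n) ℂ, IsQPoly lam a P := by
  obtain ⟨P, hP⟩ := Vpoly_dvd_Apoly lam a
  refine ⟨P, fun x hx => ?_⟩
  have h1 : MvPolynomial.eval x (Apoly lam a) = QFormula lam a x * MvPolynomial.eval x (Vpoly n) :=
    eval_Apoly lam a hx
  have h2 : MvPolynomial.eval x (Apoly lam a)
      = MvPolynomial.eval x (Vpoly n) * MvPolynomial.eval x P := by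
    rw [hP, map_mul]
  have h3 := eval_Vpoly_ne_zero hx
  refine mul_left_cancel₀ h3 ?_
  rw [← h2, h1]
  ring
end

section
/- For every strict partition λ of length at most n, the factorial Schur Q-function Q*_λ(x₁,...,xₙ) := Q_λ(x₁,...,xₙ | δ), where δ = (0,1,2,3,...), is a Q-symmetric polynomial, and the difference Q*_λ − Q_λ has total degree strictly less than |λ|. -/
set_option autoImplicit false
set_option maxHeartbeats 1000000
set_option linter.unusedVariables false


open MvPolynomial

open MvPolynomial Finset

namespace Aux

variable {n : ℕ}

/-- eval through aeval into mv-polynomials. -/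
lemma eval_aeval' (g : Fin n → MvPolynomial (Fin n) ℂ) (z : Fin n → ℂ)
    (p : MvPolynomial (Fin n) ℂ) :
    eval z (aeval g p) = eval (fun i => eval z (g i)) p := by
  induction p using MvPolynomial.induction_on with
  | C r => simp
  | add p q hp hq => simp only [map_add, hp, hq]
  | mul_X p i hp => simp only [map_mul, aeval_X, eval_X, hp]

/-- If a polynomial vanishes wherever `w` doesn't, and `w ≠ 0`, then it is zero. -/
lemma vanish {w q : MvPolynomial (Fin n) ℂ} (hw : w ≠ 0)
    (h : ∀ x : Fin n → ℂ, eval x w ≠ 0 → eval x q = 0) : q = 0 := by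
  have hwq : w * q = 0 := by
    apply MvPolynomial.funext
    intro x
    simp only [map_mul, map_zero]
    by_cases hx : eval x w = 0
    · simp [hx]
    · simp [h x hx]
  rcases mul_eq_zero.1 hwq with h' | h'
  · exact absurd h' hw
  · exact h'

/-- The pairwise-difference product for a family of polynomials. -/
noncomputable def vdm (g : Fin n → MvPolynomial (Fin n) ℂ) : MvPolynomial (Fin n) ℂ :=
  ∏ i : Fin n, ∏ j : Fin n, if i < j then g i - g j else 1

lemma eval_vdm_ne_zero_of_inj (g : Fin n → MvPolynomial (Fin n) ℂ) (z : Fin n → ℂ)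
    (h : Function.Injective fun i => eval z (g i)) : eval z (vdm g) ≠ 0 := by
  rw [vdm]
  simp only [map_prod]
  apply Finset.prod_ne_zero_iff.2
  intro i _
  apply Finset.prod_ne_zero_iff.2
  intro j _
  by_cases hij : i < j
  · simp only [hij, if_true]
    rw [map_sub, sub_ne_zero]
    exact fun hc => absurd (h hc) (ne_of_lt hij)
  · simp [hij]

lemma vdm_ne_zero (g : Fin n → MvPolynomial (Fin n) ℂ)
    (h : ∃ z : Fin n → ℂ, Function.Injective fun i => eval z (g i)) : vdm g ≠ 0 := by
  obtain ⟨z, hz⟩ := h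
  intro hc
  exact eval_vdm_ne_zero_of_inj g z hz (by rw [hc, map_zero])

lemma inj_of_eval_vdm (g : Fin n → MvPolynomial (Fin n) ℂ) (z : Fin n → ℂ)
    (h : eval z (vdm g) ≠ 0) : Function.Injective fun i => eval z (g i) := by
  intro i j hij
  by_contra hne
  apply h
  rw [vdm]
  simp only [map_prod]
  rcases lt_or_gt_of_ne hne with hlt | hlt
  · apply Finset.prod_eq_zero (Finset.mem_univ i)
    apply Finset.prod_eq_zero (Finset.mem_univ j)
    simp [hlt, map_sub, sub_eq_zero, hij]
  · apply Finset.prod_eq_zero (Finset.mem_univ j)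
    apply Finset.prod_eq_zero (Finset.mem_univ i)
    simp [hlt, map_sub, sub_eq_zero, hij.symm]

/-- 3^k as a point with pairwise distinct complex coordinates. -/
lemma inj_pow3 : Function.Injective fun i : Fin n => ((3 ^ (i : ℕ) : ℕ) : ℂ) := by
  intro i j h
  have h3 : (3 : ℕ) ^ (i : ℕ) = 3 ^ (j : ℕ) := Nat.cast_injective h
  exact Fin.ext (Nat.pow_right_injective (by norm_num) h3)

/-- Two polynomials agreeing at all injective points are equal. -/
lemma eq_of_eval_inj_eq {p q : MvPolynomial (Fin n) ℂ}
    (h : ∀ x : Fin n → ℂ, Function.Injective x → eval x p = eval x q) : p = q := by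
  rw [← sub_eq_zero]
  apply vanish (w := vdm (fun i => X i))
  · apply vdm_ne_zero
    refine ⟨fun i => ((3 ^ (i : ℕ) : ℕ) : ℂ), ?_⟩
    simpa using inj_pow3 (n := n)
  · intro x hx
    have hinj : Function.Injective x := by
      have := inj_of_eval_vdm (fun i => X i) x hx
      simpa using this
    rw [map_sub, h x hinj, sub_self]


/-- One term of the Q-formula sum. -/
noncomputable def Tm (lam : SPartition n) (a : ℕ → ℂ) (u : Fin n → ℂ)
    (σ : Equiv.Perm (Fin n)) : ℂ :=
  (∏ i : Fin lam.len, genPow a (lam.part i) (u (σ (Fin.castLE lam.len_le i)))) *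
    ∏ i : Fin lam.len, ∏ j : Fin n,
      if (i : ℕ) < (j : ℕ) then
        (u (σ (Fin.castLE lam.len_le i)) + u (σ j)) /
          (u (σ (Fin.castLE lam.len_le i)) - u (σ j))
      else 1

lemma QFormula_eq_sum_Tm (lam : SPartition n) (a : ℕ → ℂ) (x : Fin n → ℂ) :
    QFormula lam a x =
      ((2 : ℂ) ^ lam.len / ((n - lam.len).factorial : ℂ)) *
        ∑ σ : Equiv.Perm (Fin n), Tm lam a x σ := rfl

lemma Tm_perm (lam : SPartition n) (a : ℕ → ℂ) (x : Fin n → ℂ)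
    (σ τ : Equiv.Perm (Fin n)) : Tm lam a (x ∘ σ) τ = Tm lam a x (σ * τ) := rfl

lemma QFormula_perm (lam : SPartition n) (a : ℕ → ℂ) (x : Fin n → ℂ)
    (σ : Equiv.Perm (Fin n)) : QFormula lam a (x ∘ σ) = QFormula lam a x := by
  rw [QFormula_eq_sum_Tm, QFormula_eq_sum_Tm]
  congr 1
  calc ∑ τ : Equiv.Perm (Fin n), Tm lam a (x ∘ σ) τ
      = ∑ τ : Equiv.Perm (Fin n), Tm lam a x (Equiv.mulLeft σ τ) := by
        apply Finset.sum_congr rfl; intro τ _; exact Tm_perm lam a x σ τ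
    _ = ∑ τ : Equiv.Perm (Fin n), Tm lam a x τ := Equiv.sum_comp (Equiv.mulLeft σ) _

lemma Tm_eq_zero (lam : SPartition n) (a : ℕ → ℂ) (u : Fin n → ℂ) (σ : Equiv.Perm (Fin n))
    (k k' : Fin n) (hk : (k : ℕ) < lam.len) (hkk' : (k : ℕ) < (k' : ℕ))
    (hsum : u (σ k) + u (σ k') = 0) : Tm lam a u σ = 0 := by
  apply mul_eq_zero_of_right
  apply Finset.prod_eq_zero (Finset.mem_univ (⟨(k : ℕ), hk⟩ : Fin lam.len))
  apply Finset.prod_eq_zero (Finset.mem_univ k')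
  have hcast : Fin.castLE lam.len_le (⟨(k : ℕ), hk⟩ : Fin lam.len) = k := rfl
  rw [hcast, if_pos hkk', hsum, zero_div]

/-- The substitution `x₁ = t, x₂ = -t`. -/
noncomputable def vfun (t : ℂ) (x : Fin n → ℂ) : Fin n → ℂ :=
  fun i => if (i : ℕ) = 0 then t else if (i : ℕ) = 1 then -t else x i

lemma vfun_of_ne (t : ℂ) (x : Fin n → ℂ) (m : Fin n) (h0 : (m : ℕ) ≠ 0) (h1 : (m : ℕ) ≠ 1) :
    vfun t x m = x m := by simp [vfun, h0, h1]

lemma Tm_vfun_eq (h2 : 2 ≤ n) (lam : SPartition n) (a : ℕ → ℂ) (t s : ℂ) (x : Fin n → ℂ)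
    (σ : Equiv.Perm (Fin n))
    (ht : Function.Injective (vfun t x)) (hs : Function.Injective (vfun s x)) :
    Tm lam a (vfun t x) σ = Tm lam a (vfun s x) σ := by
  set e0 : Fin n := ⟨0, by omega⟩ with he0
  set e1 : Fin n := ⟨1, by omega⟩ with he1
  have he01 : e0 ≠ e1 := by
    intro h; exact absurd (congrArg Fin.val h) (by simp [he0, he1])
  set i0 : Fin n := σ.symm e0 with hi0
  set i1 : Fin n := σ.symm e1 with hi1
  have hi01 : i0 ≠ i1 := fun h => he01 (σ.symm.injective.eq_iff.1 h)
  have hv0 : ∀ r : ℂ, vfun r x e0 = r := fun r => by simp [vfun, he0]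
  have hv1 : ∀ r : ℂ, vfun r x e1 = -r := fun r => by simp [vfun, he1]
  have hse0 : σ i0 = e0 := Equiv.apply_symm_apply σ e0
  have hse1 : σ i1 = e1 := Equiv.apply_symm_apply σ e1
  by_cases hB : lam.len ≤ (i0 : ℕ) ∧ lam.len ≤ (i1 : ℕ)
  · obtain ⟨hb0, hb1⟩ := hB
    -- every head index avoids e0 and e1
    have hhead : ∀ i : Fin lam.len, σ (Fin.castLE lam.len_le i) ≠ e0 ∧
        σ (Fin.castLE lam.len_le i) ≠ e1 := by
      intro i
      constructor
      · intro hc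
        have : Fin.castLE lam.len_le i = i0 := by
          rw [hi0, ← hc, Equiv.symm_apply_apply]
        have := congrArg Fin.val this
        simp only [Fin.coe_castLE] at this
        have := i.isLt; omega
      · intro hc
        have : Fin.castLE lam.len_le i = i1 := by
          rw [hi1, ← hc, Equiv.symm_apply_apply]
        have := congrArg Fin.val this
        simp only [Fin.coe_castLE] at this
        have := i.isLt; omega
    have hval : ∀ (r : ℂ) (i : Fin lam.len),
        vfun r x (σ (Fin.castLE lam.len_le i)) = x (σ (Fin.castLE lam.len_le i)) := by
      intro r i
      obtain ⟨h0, h1⟩ := hhead i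
      apply vfun_of_ne
      · intro hc; exact h0 (Fin.ext (by simp [he0, hc]))
      · intro hc; exact h1 (Fin.ext (by simp [he1, hc]))
    unfold Tm
    congr 1
    · exact Finset.prod_congr rfl fun i _ => by rw [hval t, hval s]
    · apply Finset.prod_congr rfl
      intro i _
      have hsub : ({i0, i1} : Finset (Fin n)) ⊆ Finset.univ := Finset.subset_univ _
      rw [← Finset.prod_sdiff hsub, ← Finset.prod_sdiff hsub]
      have hpairT : ∀ (r : ℂ), Function.Injective (vfun r x) →
          (∏ j ∈ ({i0, i1} : Finset (Fin n)),
            if (i : ℕ) < (j : ℕ) then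
              (vfun r x (σ (Fin.castLE lam.len_le i)) + vfun r x (σ j)) /
                (vfun r x (σ (Fin.castLE lam.len_le i)) - vfun r x (σ j))
            else 1) = 1 := by
        intro r hr
        rw [Finset.prod_pair hi01]
        have hc0 : (i : ℕ) < (i0 : ℕ) := lt_of_lt_of_le i.isLt hb0
        have hc1 : (i : ℕ) < (i1 : ℕ) := lt_of_lt_of_le i.isLt hb1
        rw [if_pos hc0, if_pos hc1, hse0, hse1, hval r, hv0, hv1]
        have hwr : x (σ (Fin.castLE lam.len_le i)) - r ≠ 0 := by
          rw [sub_ne_zero, ← hval r i, ← hv0 r]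
          exact fun hc => (hhead i).1 (hr hc)
        have hwr' : x (σ (Fin.castLE lam.len_le i)) + r ≠ 0 := by
          rw [← sub_neg_eq_add, sub_ne_zero, ← hval r i, ← hv1 r]
          exact fun hc => (hhead i).2 (hr hc)
        set w := x (σ (Fin.castLE lam.len_le i)) with hw
        rw [← sub_eq_add_neg, sub_neg_eq_add, div_mul_div_comm,
          mul_comm (w + r) (w - r), div_self (mul_ne_zero hwr hwr')]
      rw [hpairT t ht, hpairT s hs, mul_one, mul_one]
      apply Finset.prod_congr rfl
      intro j hj
      rw [Finset.mem_sdiff] at hj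
      have hj0 : j ≠ i0 := fun hc => hj.2 (by simp [hc])
      have hj1 : j ≠ i1 := fun hc => hj.2 (by simp [hc])
      have hsj0 : σ j ≠ e0 := fun hc => hj0 (by rw [hi0, ← hc, Equiv.symm_apply_apply])
      have hsj1 : σ j ≠ e1 := fun hc => hj1 (by rw [hi1, ← hc, Equiv.symm_apply_apply])
      have hxj : ∀ r : ℂ, vfun r x (σ j) = x (σ j) := by
        intro r
        apply vfun_of_ne
        · intro hc; exact hsj0 (Fin.ext (by simp [he0, hc]))
        · intro hc; exact hsj1 (Fin.ext (by simp [he1, hc]))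
      rw [hval t, hval s, hxj t, hxj s]
  · rw [not_and_or, not_le, not_le] at hB
    rcases lt_or_gt_of_ne hi01 with hlt | hgt
    · have hk : (i0 : ℕ) < lam.len := by
        rcases hB with h | h
        · exact h
        · exact lt_trans hlt h
      rw [Tm_eq_zero lam a _ σ i0 i1 hk hlt (by rw [hse0, hse1, hv0, hv1, add_neg_cancel]),
        Tm_eq_zero lam a _ σ i0 i1 hk hlt (by rw [hse0, hse1, hv0, hv1, add_neg_cancel])]
    · have hk : (i1 : ℕ) < lam.len := by
        rcases hB with h | h
        · exact lt_trans hgt h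
        · exact h
      rw [Tm_eq_zero lam a _ σ i1 i0 hk hgt (by rw [hse0, hse1, hv0, hv1, neg_add_cancel]),
        Tm_eq_zero lam a _ σ i1 i0 hk hgt (by rw [hse0, hse1, hv0, hv1, neg_add_cancel])]

lemma QFormula_vfun_eq (h2 : 2 ≤ n) (lam : SPartition n) (a : ℕ → ℂ) (t s : ℂ)
    (x : Fin n → ℂ)
    (ht : Function.Injective (vfun t x)) (hs : Function.Injective (vfun s x)) :
    QFormula lam a (vfun t x) = QFormula lam a (vfun s x) := by
  rw [QFormula_eq_sum_Tm, QFormula_eq_sum_Tm]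
  congr 1
  exact Finset.sum_congr rfl fun σ _ => Tm_vfun_eq h2 lam a t s x σ ht hs


lemma hpow3 : ∀ a b : ℕ, ((3 ^ a : ℕ) : ℂ) = ((3 ^ b : ℕ) : ℂ) → a = b := by
  intro a b h
  exact Nat.pow_right_injective (by norm_num) (Nat.cast_injective h)

lemma inj_vfun_special (c : ℂ) (hc : c.re = 0) (hc' : c.im ≠ 0) (z : Fin n → ℂ)
    (hz : ∀ i : Fin n, 2 ≤ (i : ℕ) → z i = ((3 ^ (i : ℕ) : ℕ) : ℂ)) :
    Function.Injective (vfun c z) := by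
  have hAB : c ≠ -c := by
    intro h
    have h0 : c = 0 := by
      have h2 : (2 : ℂ) * c = 0 := by linear_combination h
      rcases mul_eq_zero.1 h2 with hx | hx
      · norm_num at hx
      · exact hx
    rw [h0] at hc'
    simp at hc'
  have hA : ∀ m : ℕ, c ≠ ((m : ℕ) : ℂ) := by
    intro m h
    apply hc'
    rw [h]
    simp
  have hB : ∀ m : ℕ, -c ≠ ((m : ℕ) : ℂ) := by
    intro m h
    apply hc'
    have := congrArg Complex.im h
    simp at this
    exact this
  intro i j h
  simp only [vfun] at h
  by_cases hi0 : (i : ℕ) = 0 <;> by_cases hj0 : (j : ℕ) = 0 <;>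
    by_cases hi1 : (i : ℕ) = 1 <;> by_cases hj1 : (j : ℕ) = 1 <;>
    simp only [hi0, hj0, hi1, hj1, if_true, if_false] at h ⊢ <;>
    first
      | exact Fin.ext (by omega)
      | (rw [hz i (by omega), hz j (by omega)] at h; exact Fin.ext (hpow3 _ _ h))
      | (exfalso; rw [hz j (by omega)] at h; exact hA _ h)
      | (exfalso; rw [hz j (by omega)] at h; exact hB _ h)
      | (exfalso; rw [hz i (by omega)] at h; exact hA _ h.symm)
      | (exfalso; rw [hz i (by omega)] at h; exact hB _ h.symm)
      | exact absurd h hAB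
      | exact absurd h.symm hAB

/-- The model point giving injective substituted values for both `t = z 0` and `t = z 1`. -/
noncomputable def zpt : Fin n → ℂ := fun k =>
  if (k : ℕ) = 0 then Complex.I else if (k : ℕ) = 1 then 3 * Complex.I
  else ((3 ^ (k : ℕ) : ℕ) : ℂ)

lemma zpt_tail : ∀ i : Fin n, 2 ≤ (i : ℕ) → zpt i = ((3 ^ (i : ℕ) : ℕ) : ℂ) := by
  intro i hi
  simp only [zpt]
  rw [if_neg (by omega), if_neg (by omega)]

lemma inj_zpt0 (e : Fin n) (he : (e : ℕ) = 0) : Function.Injective (vfun (zpt e) (zpt (n := n))) := by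
  have h : zpt e = Complex.I := by simp [zpt, he]
  rw [h]
  exact inj_vfun_special Complex.I (by simp) (by simp) zpt zpt_tail

lemma inj_zpt1 (e : Fin n) (he : (e : ℕ) = 1) : Function.Injective (vfun (zpt e) (zpt (n := n))) := by
  have h : zpt e = 3 * Complex.I := by simp [zpt, he]
  rw [h]
  exact inj_vfun_special (3 * Complex.I) (by simp) (by simp) zpt zpt_tail

/-- The polynomial substitution `x₁ ↦ X e, x₂ ↦ -X e`. -/
noncomputable def gsub (e : Fin n) : Fin n → MvPolynomial (Fin n) ℂ :=
  fun i => if (i : ℕ) = 0 then X e else if (i : ℕ) = 1 then - X e else X i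

lemma eval_gsub (e : Fin n) (z : Fin n → ℂ) :
    (fun i => eval z (gsub e i)) = vfun (z e) z := by
  funext i
  simp only [gsub, vfun]
  split_ifs <;> simp

theorem QSym_of_IsQPoly (lam : SPartition n) (a : ℕ → ℂ) (P : MvPolynomial (Fin n) ℂ)
    (hP : IsQPoly lam a P) : QSym P := by
  constructor
  · intro σ
    apply eq_of_eval_inj_eq
    intro x hx
    rw [eval_rename, hP (x ∘ σ) (hx.comp σ.injective), hP x hx]
    exact QFormula_perm lam a x σ
  · intro h2 t s x
    set e0 : Fin n := ⟨0, by omega⟩ with he0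
    set e1 : Fin n := ⟨1, by omega⟩ with he1
    have hq : aeval (gsub e0) P - aeval (gsub e1) P = 0 := by
      apply vanish (w := vdm (gsub e0) * vdm (gsub e1))
      · exact mul_ne_zero
          (vdm_ne_zero _ ⟨zpt, by rw [eval_gsub]; exact inj_zpt0 e0 rfl⟩)
          (vdm_ne_zero _ ⟨zpt, by rw [eval_gsub]; exact inj_zpt1 e1 rfl⟩)
      · intro z hz
        rw [map_mul, mul_ne_zero_iff] at hz
        have h0 : Function.Injective (vfun (z e0) z) := by
          rw [← eval_gsub]; exact inj_of_eval_vdm _ _ hz.1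
        have h1 : Function.Injective (vfun (z e1) z) := by
          rw [← eval_gsub]; exact inj_of_eval_vdm _ _ hz.2
        rw [map_sub, eval_aeval', eval_aeval', eval_gsub, eval_gsub,
          hP _ h0, hP _ h1, QFormula_vfun_eq h2 lam a (z e0) (z e1) z h0 h1, sub_self]
    set y : Fin n → ℂ := fun i => if (i : ℕ) = 0 then t else if (i : ℕ) = 1 then s else x i
      with hy
    have hy0 : y e0 = t := by simp [hy, he0]
    have hy1 : y e1 = s := by simp [hy, he1]
    have hyt : vfun (y e0) y = vfun t x := by
      funext i
      simp only [vfun, hy0]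
      split_ifs with h h'
      · rfl
      · rfl
      · simp [hy, h, h']
    have hys : vfun (y e1) y = vfun s x := by
      funext i
      simp only [vfun, hy1]
      split_ifs with h h'
      · rfl
      · rfl
      · simp [hy, h, h']
    have := congrArg (eval y) hq
    rw [map_sub, map_zero, eval_aeval', eval_aeval', eval_gsub, eval_gsub, hyt, hys,
      sub_eq_zero] at this
    exact this


/-! ### Degree bound machinery -/

lemma coeff_prod_top {ι : Type*} (s : Finset ι) (f : ι → Polynomial ℂ) (d : ι → ℕ)
    (h : ∀ i ∈ s, (f i).natDegree ≤ d i) :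
    (∏ i ∈ s, f i).coeff (∑ i ∈ s, d i) = ∏ i ∈ s, (f i).coeff (d i) := by
  induction s using Finset.cons_induction with
  | empty => simp
  | cons a s ha ih =>
    rw [Finset.prod_cons, Finset.sum_cons,
      Polynomial.coeff_mul_add_eq_of_natDegree_le (h a (Finset.mem_cons_self a s))
        (le_trans (Polynomial.natDegree_prod_le _ _)
          (Finset.sum_le_sum fun i hi => h i (Finset.mem_cons_of_mem hi))),
      ih fun i hi => h i (Finset.mem_cons_of_mem hi), Finset.prod_cons]

/-- The one-variable polynomial `∏ (y·T - aᵢ)`. -/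
noncomputable def gp (a : ℕ → ℂ) (k : ℕ) (y : ℂ) : Polynomial ℂ :=
  ∏ i ∈ Finset.range k, (Polynomial.C y * Polynomial.X - Polynomial.C (a i))

lemma gp_eval (a : ℕ → ℂ) (k : ℕ) (y t : ℂ) : (gp a k y).eval t = genPow a k (t * y) := by
  rw [gp, genPow, Polynomial.eval_prod]
  exact Finset.prod_congr rfl fun i _ => by
    rw [Polynomial.eval_sub, Polynomial.eval_mul, Polynomial.eval_C, Polynomial.eval_X,
      Polynomial.eval_C, mul_comm y t]

lemma gp_natDegree (a : ℕ → ℂ) (k : ℕ) (y : ℂ) : (gp a k y).natDegree ≤ k := by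
  refine le_trans (Polynomial.natDegree_prod_le _ _) (le_trans (Finset.sum_le_sum
    (fun i (_ : i ∈ Finset.range k) => ?_))
    (le_of_eq (by rw [Finset.sum_const, Finset.card_range, smul_eq_mul, mul_one])))
  refine le_trans (Polynomial.natDegree_sub_le _ _) (max_le ?_ (by simp))
  exact le_trans (Polynomial.natDegree_C_mul_le _ _) (by simp)

lemma gp_coeff (a : ℕ → ℂ) (k : ℕ) (y : ℂ) : (gp a k y).coeff k = y ^ k := by
  have hk : ∑ _i ∈ Finset.range k, 1 = k := by
    rw [Finset.sum_const, Finset.card_range, smul_eq_mul, mul_one]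
  have h2 := coeff_prod_top (Finset.range k)
    (fun i => Polynomial.C y * Polynomial.X - Polynomial.C (a i)) (fun _ => 1) (fun i _ => by
      refine le_trans (Polynomial.natDegree_sub_le _ _) (max_le ?_ (by simp))
      exact le_trans (Polynomial.natDegree_C_mul_le _ _) (by simp))
  rw [hk] at h2
  rw [gp, h2]
  have : ∀ i ∈ Finset.range k, (Polynomial.C y * Polynomial.X - Polynomial.C (a i)).coeff 1
      = y := by
    intro i _
    simp [Polynomial.coeff_C]
  rw [Finset.prod_congr rfl this, Finset.prod_const, Finset.card_range]

variable {n : ℕ}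

/-- The ratio part of one term. -/
noncomputable def Rt (lam : SPartition n) (x : Fin n → ℂ) (σ : Equiv.Perm (Fin n)) : ℂ :=
  ∏ i : Fin lam.len, ∏ j : Fin n,
    if (i : ℕ) < (j : ℕ) then
      (x (σ (Fin.castLE lam.len_le i)) + x (σ j)) /
        (x (σ (Fin.castLE lam.len_le i)) - x (σ j))
    else 1

lemma Tm_eq_Rt (lam : SPartition n) (a : ℕ → ℂ) (u : Fin n → ℂ) (σ : Equiv.Perm (Fin n)) :
    Tm lam a u σ =
      (∏ i : Fin lam.len, genPow a (lam.part i) (u (σ (Fin.castLE lam.len_le i)))) *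
        Rt lam u σ := rfl

lemma Rt_smul (lam : SPartition n) (x : Fin n → ℂ) (σ : Equiv.Perm (Fin n)) (t : ℂ)
    (ht : t ≠ 0) : Rt lam (t • x) σ = Rt lam x σ := by
  apply Finset.prod_congr rfl
  intro i _
  apply Finset.prod_congr rfl
  intro j _
  by_cases hij : (i : ℕ) < (j : ℕ)
  · rw [if_pos hij, if_pos hij]
    show (t * _ + t * _) / (t * _ - t * _) = _
    rw [← mul_add, ← mul_sub, mul_div_mul_left _ _ ht]
  · rw [if_neg hij, if_neg hij]

/-- The one-variable polynomial whose values at `t ≠ 0` are `QFormula lam a (t • x)`. -/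
noncomputable def polyOf (lam : SPartition n) (a : ℕ → ℂ) (x : Fin n → ℂ) : Polynomial ℂ :=
  Polynomial.C ((2 : ℂ) ^ lam.len / ((n - lam.len).factorial : ℂ)) *
    ∑ σ : Equiv.Perm (Fin n),
      (∏ i : Fin lam.len, gp a (lam.part i) (x (σ (Fin.castLE lam.len_le i)))) *
        Polynomial.C (Rt lam x σ)

lemma polyOf_eval (lam : SPartition n) (a : ℕ → ℂ) (x : Fin n → ℂ) (t : ℂ) (ht : t ≠ 0) :
    (polyOf lam a x).eval t = QFormula lam a (t • x) := by
  rw [polyOf, QFormula_eq_sum_Tm, Polynomial.eval_mul, Polynomial.eval_C,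
    Polynomial.eval_finset_sum]
  congr 1
  apply Finset.sum_congr rfl
  intro σ _
  rw [Polynomial.eval_mul, Polynomial.eval_C, Polynomial.eval_prod, Tm_eq_Rt,
    Rt_smul lam x σ t ht]
  congr 1
  apply Finset.prod_congr rfl
  intro i _
  rw [gp_eval]
  rfl

lemma polyOf_natDegree (lam : SPartition n) (a : ℕ → ℂ) (x : Fin n → ℂ) :
    (polyOf lam a x).natDegree ≤ lam.size := by
  refine le_trans (Polynomial.natDegree_C_mul_le _ _) ?_
  apply Polynomial.natDegree_sum_le_of_forall_le
  intro σ _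
  refine le_trans Polynomial.natDegree_mul_le ?_
  rw [Polynomial.natDegree_C, add_zero]
  refine le_trans (Polynomial.natDegree_prod_le _ _) ?_
  exact Finset.sum_le_sum fun i _ => gp_natDegree a (lam.part i) _

lemma polyOf_coeff_size (lam : SPartition n) (a : ℕ → ℂ) (x : Fin n → ℂ) :
    (polyOf lam a x).coeff lam.size =
      ((2 : ℂ) ^ lam.len / ((n - lam.len).factorial : ℂ)) *
        ∑ σ : Equiv.Perm (Fin n),
          (∏ i : Fin lam.len, (x (σ (Fin.castLE lam.len_le i))) ^ (lam.part i)) *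
            Rt lam x σ := by
  rw [polyOf, Polynomial.coeff_C_mul, Polynomial.finset_sum_coeff]
  congr 1
  apply Finset.sum_congr rfl
  intro σ _
  rw [Polynomial.coeff_mul_C]
  congr 1
  have hsize : lam.size = ∑ i : Fin lam.len, lam.part i := rfl
  rw [hsize, coeff_prod_top _ _ _ (fun i _ => gp_natDegree a (lam.part i) _)]
  exact Finset.prod_congr rfl fun i _ => gp_coeff a (lam.part i) _

lemma eval_smul_homog (q : MvPolynomial (Fin n) ℂ) (k : ℕ) (hq : q.IsHomogeneous k)
    (t : ℂ) (x : Fin n → ℂ) : eval (t • x) q = t ^ k * eval x q := by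
  rw [eval_eq, eval_eq, Finset.mul_sum]
  apply Finset.sum_congr rfl
  intro m hm
  have hdeg : ∑ i ∈ m.support, m i = k := by
    by_contra hc
    exact (mem_support_iff.1 hm) (hq.coeff_eq_zero (by simpa [Finsupp.degree_apply] using hc))
  have : (∏ i ∈ m.support, (t • x) i ^ m i) =
      t ^ k * ∏ i ∈ m.support, x i ^ m i := by
    have : ∀ i ∈ m.support, (t • x) i ^ m i = t ^ m i * x i ^ m i := by
      intro i _
      rw [Pi.smul_apply, smul_eq_mul, mul_pow]
    rw [Finset.prod_congr rfl this, Finset.prod_mul_distrib,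
      Finset.prod_pow_eq_pow_sum, hdeg]
  rw [this]
  ring

lemma homogComp_totalDegree_ne_zero (p : MvPolynomial (Fin n) ℂ) (hp : p ≠ 0) :
    homogeneousComponent p.totalDegree p ≠ 0 := by
  obtain ⟨m, hm, hdeg⟩ : ∃ m ∈ p.support, (m.sum fun _ e => e) = p.totalDegree := by
    have hne : p.support.Nonempty := by
      rwa [Finset.nonempty_iff_ne_empty, Ne, MvPolynomial.support_eq_empty]
    obtain ⟨m, hm, hsup⟩ := Finset.exists_mem_eq_sup p.support hne
      (fun m => m.sum fun _ e => e)
    exact ⟨m, hm, by rw [totalDegree, hsup]⟩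
  intro hc
  have h1 : coeff m (homogeneousComponent p.totalDegree p) = coeff m p := by
    rw [coeff_homogeneousComponent, if_pos]
    rw [← hdeg]
    simp [Finsupp.degree_apply, Finsupp.sum]
  rw [hc, coeff_zero] at h1
  exact (mem_support_iff.1 hm) h1.symm

lemma smul_inj {t : ℂ} (ht : t ≠ 0) {x : Fin n → ℂ} (hx : Function.Injective x) :
    Function.Injective (t • x) := by
  intro i j h
  apply hx
  exact mul_left_cancel₀ ht h

theorem sub_totalDegree_lt (lam : SPartition n) (P Pstar : MvPolynomial (Fin n) ℂ)
    (hP : IsQPoly lam zeroSeq P) (hPstar : IsQPoly lam deltaSeq Pstar) :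
    Pstar = P ∨ (Pstar - P).totalDegree < lam.size := by
  by_cases hD : Pstar - P = 0
  · left; exact sub_eq_zero.1 hD
  right
  by_contra hge
  push_neg at hge
  set D := Pstar - P with hDdef
  set d := D.totalDegree with hd
  apply homogComp_totalDegree_ne_zero D hD
  apply eq_of_eval_inj_eq (q := 0)
  intro x hx
  rw [map_zero]
  set p1 : Polynomial ℂ := polyOf lam deltaSeq x - polyOf lam zeroSeq x with hp1
  set q1 : Polynomial ℂ :=
    ∑ k ∈ Finset.range (d + 1), Polynomial.C (eval x (homogeneousComponent k D))
      * Polynomial.X ^ k with hq1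
  have heq : q1 = p1 := by
    apply Polynomial.eq_of_infinite_eval_eq
    apply Set.Infinite.mono (s := {t : ℂ | t ≠ 0})
    · intro t ht
      have ht : t ≠ 0 := ht
      have h1 : q1.eval t = eval (t • x) D := by
        conv_rhs => rw [← sum_homogeneousComponent D]
        rw [map_sum, hq1, Polynomial.eval_finset_sum]
        apply Finset.sum_congr rfl
        intro k _
        rw [Polynomial.eval_mul, Polynomial.eval_C, Polynomial.eval_pow, Polynomial.eval_X,
          eval_smul_homog _ k (homogeneousComponent_isHomogeneous k D) t x, mul_comm]
      have h2 : p1.eval t = eval (t • x) D := by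
        rw [hp1, Polynomial.eval_sub, polyOf_eval _ _ _ t ht, polyOf_eval _ _ _ t ht,
          ← hPstar _ (smul_inj ht hx), ← hP _ (smul_inj ht hx), hDdef, map_sub]
      show q1.eval t = p1.eval t
      rw [h1, h2]
    · have : ({t : ℂ | t ≠ 0}) = ({0} : Set ℂ)ᶜ := by ext u; simp
      rw [this]
      exact Set.Finite.infinite_compl (Set.finite_singleton 0)
  have hq1d : q1.coeff d = eval x (homogeneousComponent d D) := by
    rw [hq1, Polynomial.finset_sum_coeff]
    have : ∀ k ∈ Finset.range (d + 1),
        (Polynomial.C (eval x (homogeneousComponent k D)) * Polynomial.X ^ k).coeff d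
          = if k = d then eval x (homogeneousComponent k D) else 0 := by
      intro k _
      rw [Polynomial.coeff_C_mul, Polynomial.coeff_X_pow]
      by_cases hkd : k = d
      · rw [if_pos hkd, if_pos hkd.symm, mul_one]
      · rw [if_neg hkd, if_neg (fun hc => hkd hc.symm), mul_zero]
    rw [Finset.sum_congr rfl this, Finset.sum_ite_eq' (Finset.range (d + 1)) d]
    rw [if_pos (Finset.self_mem_range_succ d)]
  have hp1d : p1.coeff d = 0 := by
    rw [hp1, Polynomial.coeff_sub]
    rcases eq_or_lt_of_le hge with heq' | hlt
    · rw [← heq', polyOf_coeff_size, polyOf_coeff_size, sub_self]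
    · rw [Polynomial.coeff_eq_zero_of_natDegree_lt
          (lt_of_le_of_lt (polyOf_natDegree lam deltaSeq x) hlt),
        Polynomial.coeff_eq_zero_of_natDegree_lt
          (lt_of_le_of_lt (polyOf_natDegree lam zeroSeq x) hlt), sub_self]
  rw [← hq1d, heq, hp1d]

end Aux

/-- The factorial Schur Q-function `Q*_λ = Q_λ(·|0,1,2,…)` is Q-symmetric and
`Q*_λ - Q_λ` has total degree strictly less than `|λ|` (or is zero). -/
theorem factorialSchurQ_QSym_top_part (n : ℕ) (lam : SPartition n)
    (P Pstar : MvPolynomial (Fin n) ℂ)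
    (hP : IsQPoly lam zeroSeq P) (hPstar : IsQPoly lam deltaSeq Pstar) :
    QSym Pstar ∧ (Pstar = P ∨ (Pstar - P).totalDegree < lam.size) :=
  ⟨Aux.QSym_of_IsQPoly lam deltaSeq Pstar hPstar,
    Aux.sub_totalDegree_lt lam P Pstar hP hPstar⟩
end

section
/- Let λ, μ be strict partitions of length at most n with |μ| ≤ |λ| and μ ≠ λ. Then the factorial Schur Q-function satisfies the vanishing property Q*_λ(μ₁, ..., μₙ) = 0 (where μ is padded with zeros to length n). -/
open MvPolynomial

open Filter Topology Finset

lemma genPow_natCast_eq_zero {k m : ℕ} (h : m < k) : genPow deltaSeq k ((m : ℕ) : ℂ) = 0 :=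
  Finset.prod_eq_zero (Finset.mem_range.mpr h) (by simp [deltaSeq])

namespace SPartition

variable {n : ℕ}

lemma padN_of_lt (l : SPartition n) {j : Fin n} (h : (j : ℕ) < l.len) :
    l.padN j = l.part ⟨j, h⟩ := dif_pos h

lemma padN_of_le (l : SPartition n) {j : Fin n} (h : l.len ≤ (j : ℕ)) :
    l.padN j = 0 := dif_neg (not_lt.mpr h)

lemma padN_pos_iff (l : SPartition n) (j : Fin n) : 0 < l.padN j ↔ (j : ℕ) < l.len := by
  constructor
  · intro h
    by_contra hc
    rw [l.padN_of_le (not_lt.mp hc)] at h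
    exact lt_irrefl 0 h
  · intro h
    rw [l.padN_of_lt h]
    exact l.pos _

lemma size_eq_sum_padN (l : SPartition n) : l.size = ∑ j : Fin n, l.padN j := by
  rw [SPartition.size]
  simp only [SPartition.padN]
  rw [Fin.sum_univ_eq_sum_range (fun k => if h : k < l.len then l.part ⟨k, h⟩ else 0) n]
  rw [← Finset.sum_subset (Finset.range_subset_range.mpr l.len_le)
      (fun x _ hx => dif_neg (by simpa using hx))]
  rw [show (∑ i : Fin l.len, l.part i)
      = ∑ i : Fin l.len, (if h : (i : ℕ) < l.len then l.part ⟨i, h⟩ else 0) from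
    Finset.sum_congr rfl (fun i _ => by simp [i.isLt])]
  exact Fin.sum_univ_eq_sum_range (fun k => if h : k < l.len then l.part ⟨k, h⟩ else 0) l.len

lemma padN_eq_zero_of_eq (l : SPartition n) {a b : Fin n} (hab : a ≠ b)
    (h : l.padN a = l.padN b) : l.padN a = 0 := by
  by_cases ha : (a : ℕ) < l.len
  · by_cases hb : (b : ℕ) < l.len
    · rw [l.padN_of_lt ha, l.padN_of_lt hb] at h
      exact absurd (Fin.val_injective (by simpa using congrArg Fin.val (l.anti.injective h)))
        hab
    · rw [l.padN_of_le (not_lt.mp hb)] at h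
      exact h
  · exact l.padN_of_le (not_lt.mp ha)

end SPartition

lemma key_prod_zero {n : ℕ} (lam mu : SPartition n)
    (hsize : mu.size ≤ lam.size) (hne : mu.padN ≠ lam.padN)
    (f : Fin lam.len → Fin n) (hf : Function.Injective f) :
    ∏ i : Fin lam.len, genPow deltaSeq (lam.part i) (mu.padC (f i)) = 0 := by
  by_contra hprod
  have h1 : ∀ i, lam.part i ≤ mu.padN (f i) := by
    intro i
    by_contra hi
    exact hprod (Finset.prod_eq_zero (Finset.mem_univ i)
      (genPow_natCast_eq_zero (not_le.mp hi)))
  have himg : ∑ i : Fin lam.len, mu.padN (f i) = ∑ j ∈ Finset.univ.image f, mu.padN j :=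
    (Finset.sum_image (fun a _ b _ h => hf h)).symm
  have hsub : ∑ j ∈ Finset.univ.image f, mu.padN j ≤ mu.size := by
    rw [mu.size_eq_sum_padN]
    exact Finset.sum_le_sum_of_subset (Finset.subset_univ _)
  have hchain1 : lam.size ≤ ∑ i, mu.padN (f i) := Finset.sum_le_sum (fun i _ => h1 i)
  have heq0 : ∑ i : Fin lam.len, lam.part i = ∑ i, mu.padN (f i) :=
    le_antisymm hchain1 (le_trans (le_of_eq himg) (le_trans hsub hsize))
  have heqpt : ∀ i, lam.part i = mu.padN (f i) := fun i =>
    (Finset.sum_eq_sum_iff_of_le (fun i _ => h1 i)).mp heq0 i (Finset.mem_univ i)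
  have hTeq : ∑ j ∈ Finset.univ.image f, mu.padN j = mu.size :=
    le_antisymm hsub (by
      calc mu.size ≤ lam.size := hsize
        _ = ∑ i, mu.padN (f i) := heq0
        _ = _ := himg)
  have hzero : ∀ j : Fin n, j ∉ Finset.univ.image f → mu.padN j = 0 := by
    intro j hj
    have hs : ∑ j ∈ Finset.univ \ Finset.univ.image f, mu.padN j = 0 := by
      have h2 := Finset.sum_sdiff (f := mu.padN) (Finset.subset_univ (Finset.univ.image f))
      have h3 := mu.size_eq_sum_padN
      omega
    exact (Finset.sum_eq_zero_iff.mp hs) j (Finset.mem_sdiff.mpr ⟨Finset.mem_univ j, hj⟩)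
  -- the image of f is exactly the set of positions where mu.padN is positive
  have hmem : ∀ j : Fin n, j ∈ Finset.univ.image f ↔ (j : ℕ) < mu.len := by
    intro j
    constructor
    · intro hj
      obtain ⟨i, _, rfl⟩ := Finset.mem_image.mp hj
      exact (mu.padN_pos_iff _).mp (by rw [← heqpt i]; exact lam.pos i)
    · intro hj
      by_contra hc
      have h5 := hzero j hc
      rw [mu.padN_of_lt hj] at h5
      have h6 := mu.pos ⟨(j : ℕ), hj⟩
      omega
  -- cardinality: lam.len = mu.len
  have hcard : lam.len = mu.len := by
    have hc1 : (Finset.univ.image f).card = lam.len := by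
      rw [Finset.card_image_of_injective _ hf, Finset.card_univ, Fintype.card_fin]
    have hc2 : Finset.univ.image f = Finset.univ.image (Fin.castLE mu.len_le) := by
      ext j
      rw [hmem]
      constructor
      · intro hj
        exact Finset.mem_image.mpr ⟨⟨(j : ℕ), hj⟩, Finset.mem_univ _, by ext; rfl⟩
      · intro hj
        obtain ⟨i, _, rfl⟩ := Finset.mem_image.mp hj
        exact i.isLt
    have hc3 : (Finset.univ.image (Fin.castLE mu.len_le)).card = mu.len := by
      rw [Finset.card_image_of_injective _ (Fin.castLE_injective mu.len_le),
        Finset.card_univ, Fintype.card_fin]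
    rw [← hc1, hc2, hc3]
  -- the induced bijection g : Fin lam.len → Fin mu.len
  have hflt : ∀ i : Fin lam.len, ((f i : ℕ)) < mu.len := fun i =>
    (hmem (f i)).mp (Finset.mem_image_of_mem f (Finset.mem_univ i))
  set g : Fin lam.len → Fin mu.len := fun i => ⟨(f i : ℕ), hflt i⟩ with hg
  have hginj : Function.Injective g := by
    intro a b hab
    have h7 : ((g a : ℕ)) = ((g b : ℕ)) := congrArg Fin.val hab
    have h8 : ((f a : ℕ)) = ((f b : ℕ)) := h7
    exact hf (Fin.val_injective h8)
  have hgbij : Function.Bijective g :=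
    (Fintype.bijective_iff_injective_and_card g).mpr ⟨hginj, by simp [hcard]⟩
  have hgi : ∀ i, mu.part (g i) = lam.part i := by
    intro i
    rw [← mu.padN_of_lt (hflt i)]
    exact (heqpt i).symm
  -- equal ranges of strictly decreasing maps
  have hrange : Set.range lam.part = Set.range (mu.part ∘ Fin.cast hcard) := by
    have h4 : lam.part = mu.part ∘ g := funext fun i => (hgi i).symm
    rw [h4, Set.range_comp, Set.range_comp,
      Set.range_eq_univ.mpr hgbij.surjective,
      Set.range_eq_univ.mpr (fun j => ⟨Fin.cast hcard.symm j, rfl⟩)]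
  have hanti : StrictAnti (mu.part ∘ Fin.cast hcard) :=
    mu.anti.comp_strictMono (fun a b h => h)
  have hfinal : lam.part = mu.part ∘ Fin.cast hcard :=
    (StrictAnti.range_inj lam.anti hanti).mp hrange
  apply hne
  funext j
  by_cases h : (j : ℕ) < lam.len
  · rw [mu.padN_of_lt (hcard ▸ h), lam.padN_of_lt h]
    have := congrFun hfinal ⟨(j : ℕ), h⟩
    rw [this]
    rfl
  · rw [mu.padN_of_le (le_of_not_gt (hcard ▸ h)), lam.padN_of_le (le_of_not_gt h)]

/-- Vanishing property: if `|μ| ≤ |λ|` and `μ ≠ λ`, then `Q*_λ(μ) = 0`. -/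
theorem factorialSchurQ_vanishing (n : ℕ) (lam mu : SPartition n)
    (Pstar : MvPolynomial (Fin n) ℂ) (hPstar : IsQPoly lam deltaSeq Pstar)
    (hsize : mu.size ≤ lam.size) (hne : mu.padN ≠ lam.padN) :
    MvPolynomial.eval mu.padC Pstar = 0 := by
  classical
  set X : ℂ → Fin n → ℂ := fun ε i => mu.padC i + ε * ((i : ℕ) : ℂ) with hXdef
  have hX0 : X 0 = mu.padC := by funext i; simp [hXdef]
  -- X ε is injective eventually near 0 (punctured)
  have hinj : ∀ᶠ ε in 𝓝[≠] (0 : ℂ), Function.Injective (X ε) := by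
    have hball : ∀ᶠ ε in 𝓝 (0 : ℂ), ‖ε‖ < 1 / (n + 1) := by
      filter_upwards [Metric.ball_mem_nhds (0 : ℂ)
        (by positivity : (0 : ℝ) < 1 / (n + 1))] with ε hε
      simpa [dist_zero_right] using hε
    filter_upwards [eventually_nhdsWithin_of_eventually_nhds hball,
      self_mem_nhdsWithin] with ε hε hε0
    intro a b hab
    by_cases hpad : mu.padN a = mu.padN b
    · have hpc : mu.padC a = mu.padC b := by simp [SPartition.padC, hpad]
      have h1 : mu.padC a + ε * ((a : ℕ) : ℂ) = mu.padC b + ε * ((b : ℕ) : ℂ) := hab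
      rw [hpc] at h1
      have h2 : ((a : ℕ) : ℂ) = ((b : ℕ) : ℂ) :=
        mul_left_cancel₀ hε0 (add_left_cancel h1)
      exact Fin.val_injective (Nat.cast_injective h2)
    · exfalso
      have h1 : mu.padC a + ε * ((a : ℕ) : ℂ) = mu.padC b + ε * ((b : ℕ) : ℂ) := hab
      have hdiff : mu.padC a - mu.padC b = ε * (((b : ℕ) : ℂ) - ((a : ℕ) : ℂ)) := by
        linear_combination h1
      have hzz : ((mu.padN a : ℤ) - (mu.padN b : ℤ)) ≠ 0 :=
        sub_ne_zero.mpr (by exact_mod_cast hpad)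
      have h1le : (1 : ℝ) ≤ ‖mu.padC a - mu.padC b‖ := by
        have hrw : mu.padC a - mu.padC b = (((mu.padN a : ℤ) - (mu.padN b : ℤ) : ℤ) : ℂ) := by
          simp [SPartition.padC]
        rw [hrw, Complex.norm_intCast]
        have := Int.one_le_abs hzz
        rw [← Int.cast_abs]
        exact_mod_cast this
      have hub : ‖ε * (((b : ℕ) : ℂ) - ((a : ℕ) : ℂ))‖ < 1 := by
        rw [norm_mul]
        have hb1 : ‖((b : ℕ) : ℂ) - ((a : ℕ) : ℂ)‖ ≤ (n : ℝ) + 1 := by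
          have hrw : ((b : ℕ) : ℂ) - ((a : ℕ) : ℂ) = (((b : ℕ) : ℤ) - ((a : ℕ) : ℤ) : ℤ) := by
            push_cast; ring
          rw [hrw, Complex.norm_intCast]
          have hbn : ((b : ℕ) : ℤ) < (n : ℤ) := by exact_mod_cast b.isLt
          have han : ((a : ℕ) : ℤ) < (n : ℤ) := by exact_mod_cast a.isLt
          have : |((b : ℕ) : ℤ) - ((a : ℕ) : ℤ)| ≤ (n : ℤ) + 1 := by
            rw [abs_le]; omega
          rw [← Int.cast_abs]
          exact_mod_cast this
        have hε' : (0 : ℝ) ≤ ‖ε‖ := norm_nonneg ε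
        have hnpos : (0 : ℝ) < (n : ℝ) + 1 := by positivity
        calc ‖ε‖ * ‖((b : ℕ) : ℂ) - ((a : ℕ) : ℂ)‖ ≤ ‖ε‖ * ((n : ℝ) + 1) := by
              exact mul_le_mul_of_nonneg_left hb1 hε'
          _ < (1 / ((n : ℝ) + 1)) * ((n : ℝ) + 1) := by
              exact mul_lt_mul_of_pos_right (by exact_mod_cast hε) hnpos
          _ = 1 := by field_simp
      rw [hdiff] at h1le
      linarith
  -- the polynomial equals the formula on injective points
  have heval : ∀ᶠ ε in 𝓝[≠] (0 : ℂ),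
      MvPolynomial.eval (X ε) Pstar = QFormula lam deltaSeq (X ε) :=
    hinj.mono fun ε h => hPstar (X ε) h
  -- continuity of evaluation
  have hcX : Continuous X :=
    continuous_pi fun i => continuous_const.add (continuous_id.mul continuous_const)
  have htend1 : Filter.Tendsto (fun ε => MvPolynomial.eval (X ε) Pstar) (𝓝[≠] (0 : ℂ))
      (𝓝 (MvPolynomial.eval mu.padC Pstar)) := by
    have h := ((MvPolynomial.continuous_eval (p := Pstar)).comp hcX).tendsto 0
    have h' : Filter.Tendsto (fun ε => MvPolynomial.eval (X ε) Pstar) (𝓝 (0 : ℂ))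
        (𝓝 (MvPolynomial.eval (X 0) Pstar)) := h
    rw [hX0] at h'
    exact h'.mono_left nhdsWithin_le_nhds
  -- the formula tends to 0 along the punctured neighborhood
  have htend2 : Filter.Tendsto (fun ε => QFormula lam deltaSeq (X ε)) (𝓝[≠] (0 : ℂ))
      (𝓝 0) := by
    have hsum : Filter.Tendsto
        (fun ε => ∑ σ : Equiv.Perm (Fin n),
          (∏ i : Fin lam.len, genPow deltaSeq (lam.part i)
            (X ε (σ (Fin.castLE lam.len_le i)))) *
          ∏ i : Fin lam.len, ∏ j : Fin n,
            if (i : ℕ) < (j : ℕ) then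
              (X ε (σ (Fin.castLE lam.len_le i)) + X ε (σ j)) /
                (X ε (σ (Fin.castLE lam.len_le i)) - X ε (σ j))
            else 1)
        (𝓝[≠] (0 : ℂ)) (𝓝 0) := by
      rw [show (0 : ℂ) = ∑ _σ : Equiv.Perm (Fin n), 0 from by simp]
      apply tendsto_finset_sum
      intro σ _
      have hXtend : ∀ c : Fin n, Filter.Tendsto (fun ε : ℂ => X ε c) (𝓝 (0 : ℂ))
          (𝓝 (mu.padC c)) := by
        intro c
        have hc : Continuous fun ε : ℂ => X ε c := by
          simp only [hXdef]; fun_prop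
        simpa [hXdef] using hc.tendsto 0
      have hG : Filter.Tendsto (fun ε => ∏ i : Fin lam.len,
          genPow deltaSeq (lam.part i) (X ε (σ (Fin.castLE lam.len_le i))))
          (𝓝[≠] (0 : ℂ)) (𝓝 0) := by
        have hc : Continuous (fun ε : ℂ => ∏ i : Fin lam.len,
            genPow deltaSeq (lam.part i) (X ε (σ (Fin.castLE lam.len_le i)))) := by
          apply continuous_finset_prod
          intro i _
          unfold genPow
          apply continuous_finset_prod
          intro k _
          simp only [hXdef, deltaSeq]
          fun_prop
        have hval : (∏ i : Fin lam.len,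
            genPow deltaSeq (lam.part i) (X 0 (σ (Fin.castLE lam.len_le i)))) = 0 := by
          rw [hX0]
          exact key_prod_zero lam mu hsize hne (fun i => σ (Fin.castLE lam.len_le i))
            (fun a b h => Fin.castLE_injective _ (σ.injective h))
        have h := hc.tendsto 0
        rw [hval] at h
        exact h.mono_left nhdsWithin_le_nhds
      have hF : ∃ L : ℂ, Filter.Tendsto (fun ε => ∏ i : Fin lam.len, ∏ j : Fin n,
          if (i : ℕ) < (j : ℕ) then
            (X ε (σ (Fin.castLE lam.len_le i)) + X ε (σ j)) /
              (X ε (σ (Fin.castLE lam.len_le i)) - X ε (σ j))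
          else 1) (𝓝[≠] (0 : ℂ)) (𝓝 L) := by
        have hij : ∀ (i : Fin lam.len) (j : Fin n), ∃ L : ℂ, Filter.Tendsto (fun ε =>
            if (i : ℕ) < (j : ℕ) then
              (X ε (σ (Fin.castLE lam.len_le i)) + X ε (σ j)) /
                (X ε (σ (Fin.castLE lam.len_le i)) - X ε (σ j))
            else 1) (𝓝[≠] (0 : ℂ)) (𝓝 L) := by
          intro i j
          by_cases hlt : (i : ℕ) < (j : ℕ)
          · simp only [if_pos hlt]
            set a := σ (Fin.castLE lam.len_le i) with ha
            set b := σ j with hb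
            have hab : a ≠ b := by
              intro h
              have h1 := σ.injective h
              have hv := congrArg Fin.val h1
              simp only [Fin.coe_castLE] at hv
              omega
            have hnum : Filter.Tendsto (fun ε => X ε a + X ε b) (𝓝 (0 : ℂ))
                (𝓝 (mu.padC a + mu.padC b)) := (hXtend a).add (hXtend b)
            have hden : Filter.Tendsto (fun ε => X ε a - X ε b) (𝓝 (0 : ℂ))
                (𝓝 (mu.padC a - mu.padC b)) := (hXtend a).sub (hXtend b)
            by_cases hpad : mu.padN a = mu.padN b
            · have hz : mu.padN a = 0 := mu.padN_eq_zero_of_eq hab hpad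
              have hz' : mu.padN b = 0 := hpad.symm.trans hz
              refine ⟨(((a : ℕ) : ℂ) + ((b : ℕ) : ℂ)) / (((a : ℕ) : ℂ) - ((b : ℕ) : ℂ)), ?_⟩
              apply Filter.Tendsto.congr' _ tendsto_const_nhds
              filter_upwards [self_mem_nhdsWithin] with ε (hε : ε ≠ 0)
              have hXa : X ε a = ε * ((a : ℕ) : ℂ) := by
                simp [hXdef, SPartition.padC, hz]
              have hXb : X ε b = ε * ((b : ℕ) : ℂ) := by
                simp [hXdef, SPartition.padC, hz']
              rw [hXa, hXb, ← mul_add, ← mul_sub, mul_div_mul_left _ _ hε]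
            · have hdenne : mu.padC a - mu.padC b ≠ 0 := by
                rw [sub_ne_zero]
                exact fun h => hpad (Nat.cast_injective h)
              exact ⟨_, (hnum.div hden hdenne).mono_left nhdsWithin_le_nhds⟩
          · exact ⟨1, by simp only [if_neg hlt]; exact tendsto_const_nhds⟩
        choose L hL using hij
        refine ⟨∏ i, ∏ j, L i j, ?_⟩
        apply tendsto_finset_prod
        intro i _
        exact tendsto_finset_prod _ (fun j _ => hL i j)
      obtain ⟨L, hL⟩ := hF
      have h := hG.mul hL
      simpa using h
    have h2 := hsum.const_mul ((2 : ℂ) ^ lam.len / ((n - lam.len).factorial : ℂ))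
    simpa [QFormula] using h2
  have hA : Filter.Tendsto (fun ε => QFormula lam deltaSeq (X ε)) (𝓝[≠] (0 : ℂ))
      (𝓝 (MvPolynomial.eval mu.padC Pstar)) := Filter.Tendsto.congr' heval htend1
  exact tendsto_nhds_unique hA htend2
end

section
/- Stronger vanishing property: for strict partitions λ, μ of length at most n, if λ is not contained in μ (i.e., λ_j > μ_j for some j after padding with zeros), then Q*_λ(μ₁,...,μₙ) = 0. -/
open MvPolynomial

/- ### Auxiliary lemmas -/

lemma padN_anti {n : ℕ} (mu : SPartition n) {k l : Fin n} (h : (k : ℕ) ≤ (l : ℕ)) :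
    mu.padN l ≤ mu.padN k := by
  unfold SPartition.padN
  by_cases hl : (l : ℕ) < mu.len
  · have hk : (k : ℕ) < mu.len := lt_of_le_of_lt h hl
    rw [dif_pos hl, dif_pos hk]
    exact mu.anti.antitone (show (⟨k, hk⟩ : Fin mu.len) ≤ ⟨l, hl⟩ from h)
  · rw [dif_neg hl]
    exact Nat.zero_le _

lemma padN_zero_of_eq {n : ℕ} (mu : SPartition n) {a b : Fin n} (hab : a ≠ b)
    (h : mu.padN a = mu.padN b) : mu.padN a = 0 ∧ mu.padN b = 0 := by
  by_cases ha : (a : ℕ) < mu.len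
  · by_cases hb : (b : ℕ) < mu.len
    · exfalso
      apply hab
      have h' : mu.part ⟨a, ha⟩ = mu.part ⟨b, hb⟩ := by
        simpa [SPartition.padN, ha, hb] using h
      have hv : (a : ℕ) = (b : ℕ) := by
        have := mu.anti.injective h'
        simpa [Fin.ext_iff] using this
      exact Fin.ext hv
    · have hb0 : mu.padN b = 0 := by simp [SPartition.padN, hb]
      exact ⟨h.trans hb0, hb0⟩
  · have ha0 : mu.padN a = 0 := by simp [SPartition.padN, ha]
    exact ⟨ha0, h.symm.trans ha0⟩

lemma genPow_delta_zero {m k : ℕ} (h : m < k) : genPow deltaSeq k (m : ℂ) = 0 := by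
  apply Finset.prod_eq_zero (Finset.mem_range.mpr h)
  simp [deltaSeq]

lemma exists_small {n : ℕ} (lam mu : SPartition n)
    (hnotsub : ∃ i : Fin n, mu.padN i < lam.padN i) (σ : Equiv.Perm (Fin n)) :
    ∃ i : Fin lam.len, mu.padN (σ (Fin.castLE lam.len_le i)) < lam.part i := by
  obtain ⟨j, hj⟩ := hnotsub
  have hjlen : (j : ℕ) < lam.len := by
    by_contra h
    simp [SPartition.padN, h] at hj
  have hlamj : lam.padN j = lam.part ⟨j, hjlen⟩ := by
    simp [SPartition.padN, hjlen]
  by_contra hcon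
  push_neg at hcon
  have key : ∀ i : Fin ((j : ℕ) + 1),
      ((σ (Fin.castLE lam.len_le
        ⟨(i : ℕ), lt_of_le_of_lt (Nat.lt_succ_iff.mp i.isLt) hjlen⟩)) : ℕ) < (j : ℕ) := by
    intro i
    set i' : Fin lam.len := ⟨(i : ℕ), lt_of_le_of_lt (Nat.lt_succ_iff.mp i.isLt) hjlen⟩ with hi'
    have h1 : lam.part ⟨(j : ℕ), hjlen⟩ ≤ lam.part i' :=
      lam.anti.antitone (show i' ≤ ⟨(j : ℕ), hjlen⟩ from Nat.lt_succ_iff.mp i.isLt)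
    have h2 := hcon i'
    have h3 : mu.padN j < mu.padN (σ (Fin.castLE lam.len_le i')) :=
      lt_of_lt_of_le (hlamj ▸ hj) (le_trans h1 h2)
    by_contra hge
    push_neg at hge
    exact absurd (padN_anti mu hge) (not_le.mpr h3)
  have hinj : Function.Injective
      (fun i : Fin ((j : ℕ) + 1) =>
        (⟨_, key i⟩ : Fin (j : ℕ))) := by
    intro a b hab
    simp only [Fin.mk.injEq] at hab
    have h2 := σ.injective (Fin.ext hab)
    have h3 : (a : ℕ) = (b : ℕ) := by simpa using congrArg Fin.val h2
    exact Fin.ext h3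
  have := Fintype.card_le_of_injective _ hinj
  simp at this


open Topology Filter

/- ### Perturbation setup -/

/-- perturbation direction -/
noncomputable def cdir {n : ℕ} (k : Fin n) : ℂ := ((k : ℕ) : ℂ) + 1

/-- the perturbed point -/
noncomputable def xfun {n : ℕ} (mu : SPartition n) (t : ℂ) (k : Fin n) : ℂ :=
  ((mu.padN k : ℕ) : ℂ) + t * cdir k

lemma cdir_sub_ne {n : ℕ} {a b : Fin n} (hab : a ≠ b) : cdir a - cdir b ≠ 0 := by
  rw [sub_ne_zero]
  intro h
  apply hab
  have h' : ((a : ℕ) : ℂ) = ((b : ℕ) : ℂ) := by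
    have := h; unfold cdir at this; exact add_right_cancel this
  exact Fin.ext (Nat.cast_injective h')

lemma xfun_zero {n : ℕ} (mu : SPartition n) : xfun mu 0 = mu.padC := by
  funext k
  simp [xfun, SPartition.padC]

/-- the bad set of parameters -/
noncomputable def badSet {n : ℕ} (mu : SPartition n) : Set ℂ :=
  {0} ∪ ⋃ p : Fin n × Fin n, {t | p.1 ≠ p.2 ∧ xfun mu t p.1 = xfun mu t p.2}

lemma badSet_finite {n : ℕ} (mu : SPartition n) : (badSet mu).Finite := by
  apply (Set.finite_singleton 0).union
  apply Set.finite_iUnion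
  intro p
  apply Set.Subsingleton.finite
  intro t1 h1 t2 h2
  obtain ⟨hne, he1⟩ := h1
  obtain ⟨-, he2⟩ := h2
  have hq : t1 * (cdir p.1 - cdir p.2) = t2 * (cdir p.1 - cdir p.2) := by
    unfold xfun at he1 he2
    linear_combination he1 - he2
  exact mul_right_cancel₀ (cdir_sub_ne hne) hq

lemma zero_mem_badSet {n : ℕ} (mu : SPartition n) : (0 : ℂ) ∈ badSet mu := Or.inl rfl

lemma xfun_inj {n : ℕ} (mu : SPartition n) {t : ℂ} (ht : t ∉ badSet mu) :
    Function.Injective (xfun mu t) := by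
  intro a b hab
  by_contra hne
  exact ht (Or.inr (Set.mem_iUnion.mpr ⟨(a, b), hne, hab⟩))

lemma xfun_cont {n : ℕ} (mu : SPartition n) (k : Fin n) :
    Continuous fun t : ℂ => xfun mu t k := by
  unfold xfun
  exact continuous_const.add (continuous_id.mul continuous_const)

/-- regularized ratio -/
noncomputable def rfun {n : ℕ} (mu : SPartition n) (a b : Fin n) (t : ℂ) : ℂ :=
  if mu.padN a = 0 ∧ mu.padN b = 0 then (cdir a + cdir b) / (cdir a - cdir b)
  else (xfun mu t a + xfun mu t b) / (xfun mu t a - xfun mu t b)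

lemma rfun_eq {n : ℕ} (mu : SPartition n) (a b : Fin n) {t : ℂ} (ht : t ≠ 0) :
    (xfun mu t a + xfun mu t b) / (xfun mu t a - xfun mu t b) = rfun mu a b t := by
  unfold rfun
  by_cases h : mu.padN a = 0 ∧ mu.padN b = 0
  · rw [if_pos h]
    have h1 : xfun mu t a + xfun mu t b = t * (cdir a + cdir b) := by
      unfold xfun; rw [h.1, h.2]; push_cast; ring
    have h2 : xfun mu t a - xfun mu t b = t * (cdir a - cdir b) := by
      unfold xfun; rw [h.1, h.2]; push_cast; ring
    rw [h1, h2, mul_div_mul_left _ _ ht]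
  · rw [if_neg h]

lemma rfun_cont {n : ℕ} (mu : SPartition n) {a b : Fin n} (hab : a ≠ b) :
    ContinuousAt (rfun mu a b) 0 := by
  unfold rfun
  by_cases h : mu.padN a = 0 ∧ mu.padN b = 0
  · simp only [if_pos h]
    exact continuousAt_const
  · simp only [if_neg h]
    apply ContinuousAt.div
    · exact ((xfun_cont mu a).add (xfun_cont mu b)).continuousAt
    · exact ((xfun_cont mu a).sub (xfun_cont mu b)).continuousAt
    · have hne : mu.padN a ≠ mu.padN b := fun he => h (padN_zero_of_eq mu hab he)
      have e1 : xfun mu 0 a = ((mu.padN a : ℕ) : ℂ) := by unfold xfun; ring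
      have e2 : xfun mu 0 b = ((mu.padN b : ℕ) : ℂ) := by unfold xfun; ring
      rw [e1, e2, sub_ne_zero]
      exact fun hc => hne (Nat.cast_injective hc)

lemma genPow_cont (a : ℕ → ℂ) (k : ℕ) : Continuous (genPow a k) := by
  unfold genPow
  exact continuous_finset_prod _ fun i _ => continuous_id.sub continuous_const

/-- regularized term of the formula -/
noncomputable def Tfun {n : ℕ} (lam mu : SPartition n) (σ : Equiv.Perm (Fin n)) (t : ℂ) : ℂ :=
  (∏ i : Fin lam.len,
      genPow deltaSeq (lam.part i) (xfun mu t (σ (Fin.castLE lam.len_le i)))) *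
    ∏ i : Fin lam.len, ∏ j : Fin n,
      if (i : ℕ) < (j : ℕ) then rfun mu (σ (Fin.castLE lam.len_le i)) (σ j) t else 1

lemma Tfun_cont {n : ℕ} (lam mu : SPartition n) (σ : Equiv.Perm (Fin n)) :
    ContinuousAt (Tfun lam mu σ) 0 := by
  unfold Tfun
  apply ContinuousAt.mul
  · exact tendsto_finset_prod _ fun i _ =>
      ((genPow_cont deltaSeq (lam.part i)).comp (xfun_cont mu _)).continuousAt
  · apply tendsto_finset_prod
    intro i _
    apply tendsto_finset_prod
    intro j _
    by_cases hij : (i : ℕ) < (j : ℕ)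
    · simp only [if_pos hij]
      apply rfun_cont
      intro he
      have hv : ((Fin.castLE lam.len_le i : Fin n) : ℕ) = (j : ℕ) :=
        congrArg Fin.val (σ.injective he)
      simp at hv
      omega
    · simp only [if_neg hij]
      exact tendsto_const_nhds

lemma Tfun_zero {n : ℕ} (lam mu : SPartition n)
    (hnotsub : ∃ i : Fin n, mu.padN i < lam.padN i) (σ : Equiv.Perm (Fin n)) :
    Tfun lam mu σ 0 = 0 := by
  obtain ⟨i, hi⟩ := exists_small lam mu hnotsub σ
  have h0 : (∏ i : Fin lam.len,
      genPow deltaSeq (lam.part i) (xfun mu 0 (σ (Fin.castLE lam.len_le i)))) = 0 := by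
    apply Finset.prod_eq_zero (Finset.mem_univ i)
    have e : xfun mu 0 (σ (Fin.castLE lam.len_le i)) =
        ((mu.padN (σ (Fin.castLE lam.len_le i)) : ℕ) : ℂ) := by unfold xfun; ring
    rw [e]
    exact genPow_delta_zero hi
  unfold Tfun
  rw [h0, zero_mul]

/-- regularized formula -/
noncomputable def PhiFun {n : ℕ} (lam mu : SPartition n) (t : ℂ) : ℂ :=
  ((2 : ℂ) ^ lam.len / ((n - lam.len).factorial : ℂ)) *
    ∑ σ : Equiv.Perm (Fin n), Tfun lam mu σ t

lemma PhiFun_cont {n : ℕ} (lam mu : SPartition n) : ContinuousAt (PhiFun lam mu) 0 := by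
  unfold PhiFun
  exact ContinuousAt.mul continuousAt_const
    (tendsto_finset_sum _ fun σ _ => Tfun_cont lam mu σ)

lemma PhiFun_zero {n : ℕ} (lam mu : SPartition n)
    (hnotsub : ∃ i : Fin n, mu.padN i < lam.padN i) : PhiFun lam mu 0 = 0 := by
  unfold PhiFun
  rw [Finset.sum_congr rfl fun σ _ => Tfun_zero lam mu hnotsub σ]
  simp

lemma QFormula_eq_Phi {n : ℕ} (lam mu : SPartition n) {t : ℂ} (ht : t ∉ badSet mu) :
    QFormula lam deltaSeq (xfun mu t) = PhiFun lam mu t := by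
  have ht0 : t ≠ 0 := fun h => ht (h ▸ zero_mem_badSet mu)
  unfold QFormula PhiFun Tfun
  congr 1
  apply Finset.sum_congr rfl
  intro σ _
  congr 1
  apply Finset.prod_congr rfl
  intro i _
  apply Finset.prod_congr rfl
  intro j _
  by_cases hij : (i : ℕ) < (j : ℕ)
  · rw [if_pos hij, if_pos hij]
    exact rfun_eq mu _ _ ht0
  · rw [if_neg hij, if_neg hij]

/-- Stronger vanishing: if `λ ⊄ μ` then `Q*_λ(μ) = 0`. -/
theorem factorialSchurQ_strong_vanishing (n : ℕ) (lam mu : SPartition n)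
    (Pstar : MvPolynomial (Fin n) ℂ) (hPstar : IsQPoly lam deltaSeq Pstar)
    (hnotsub : ∃ i : Fin n, mu.padN i < lam.padN i) :
    MvPolynomial.eval mu.padC Pstar = 0 := by
  classical
  set g : ℂ → ℂ := fun t => MvPolynomial.eval (xfun mu t) Pstar with hgdef
  have hg_cont : Continuous g := by
    have h1 : Continuous fun x : Fin n → ℂ => MvPolynomial.eval x Pstar :=
      MvPolynomial.continuous_eval Pstar
    have h2 : Continuous (xfun mu) := continuous_pi fun k => xfun_cont mu k
    exact h1.comp h2
  have hgF : ∀ t ∉ badSet mu, g t = PhiFun lam mu t := fun t ht =>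
    (hPstar (xfun mu t) (xfun_inj mu ht)).trans (QFormula_eq_Phi lam mu ht)
  haveI : Filter.NeBot (𝓝[≠] (0 : ℂ)) := Filter.NeBot.mono inferInstance le_rfl
  have hFcmem : (badSet mu)ᶜ ∈ 𝓝[≠] (0 : ℂ) := by
    have h1 : (badSet mu \ {0})ᶜ ∈ 𝓝 (0 : ℂ) := by
      apply IsOpen.mem_nhds ((badSet_finite mu).diff).isClosed.isOpen_compl
      simp
    have h3 : (badSet mu \ {0})ᶜ ∈ 𝓝[≠] (0 : ℂ) := nhdsWithin_le_nhds h1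
    have h2 : ({(0 : ℂ)}ᶜ : Set ℂ) ∈ 𝓝[≠] (0 : ℂ) := self_mem_nhdsWithin
    filter_upwards [h3, h2] with t ht1 ht2
    exact fun htF => ht1 ⟨htF, ht2⟩
  have hgt : Filter.Tendsto g (𝓝[≠] (0 : ℂ)) (𝓝 (g 0)) :=
    hg_cont.continuousAt.continuousWithinAt
  have hΦt : Filter.Tendsto (PhiFun lam mu) (𝓝[≠] (0 : ℂ)) (𝓝 0) := by
    have h1 : Filter.Tendsto (PhiFun lam mu) (𝓝[≠] (0 : ℂ)) (𝓝 (PhiFun lam mu 0)) :=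
      (PhiFun_cont lam mu).continuousWithinAt
    rwa [PhiFun_zero lam mu hnotsub] at h1
  have hgΦ : g =ᶠ[𝓝[≠] (0 : ℂ)] PhiFun lam mu := by
    filter_upwards [hFcmem] with t ht using hgF t ht
  have hgt0 : Filter.Tendsto g (𝓝[≠] (0 : ℂ)) (𝓝 0) := hΦt.congr' hgΦ.symm
  have hg0 : g 0 = 0 := tendsto_nhds_unique hgt hgt0
  have hfin : MvPolynomial.eval (xfun mu 0) Pstar = 0 := hg0
  rwa [xfun_zero mu] at hfin
end
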